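/- arXiv:1411.3097 — 4 statements merged into one kernel-verified Lean document; each statement's English description precedes it below -/
import Mathlib

section
/- Let I ⊆ ℝ be nonempty and open. Suppose there exist positive reals x₁, x₂, b, K, ε and a function g : cl(B(x₂,b)) × I → ℝ such that: (i) g is continuous; (ii) g is uniformly Lipschitz with constant K/b in its first argument; (iii) ε ≤ g(x,y) ≤ K for all (x,y) and x₂ − x₁ ∈ (0, (b/K)ε). Then for every ψ ∈ C¹([−b/K, 0], I) there exists a unique y ∈ C¹([0, b/K], ℝ) with y(s) ∈ cl(B(x₂,b)) for all s, satisfying y(0) = x₂ and y'(s) = −g(y(s), ψ(−s)) for s ∈ (0, b/K); moreover there exists a unique τ ∈ (0, b/K) with y(τ) = x₁. -/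
open Set

noncomputable def supN {X : Type*} [NormedAddCommGroup X] (a b : ℝ) (f : ℝ → X) : ℝ :=
  ⨆ t : Set.Icc a b, ‖f t.1‖

def C1on {X : Type*} [NormedAddCommGroup X] [NormedSpace ℝ X] (a b : ℝ) (f : ℝ → X) : Prop :=
  ContinuousOn f (Set.Icc a b) ∧ (∀ t ∈ Set.Icc a b, DifferentiableWithinAt ℝ f (Set.Icc a b) t) ∧
    ContinuousOn (derivWithin f (Set.Icc a b)) (Set.Icc a b)

noncomputable def nC1 {X : Type*} [NormedAddCommGroup X] [NormedSpace ℝ X] (a b : ℝ) (f : ℝ → X) : ℝ :=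
  supN a b f + supN a b (derivWithin f (Set.Icc a b))

/-- Picard–Lindelöf theorem for y' = -g(y, ψ(-·)), y(0) = x₂, with
values in cl(B(x₂,b)), plus unique hitting time τ ∈ (0, b/K) with y(τ) = x₁. -/
theorem stmt3 (I : Set ℝ) (hIo : IsOpen I) (hIne : I.Nonempty)
    (x₁ x₂ b K ε : ℝ) (hx₁ : 0 < x₁) (hx₂ : 0 < x₂) (hb : 0 < b) (hK : 0 < K) (hε : 0 < ε)
    (g : ℝ → ℝ → ℝ)
    (hgc : ContinuousOn (fun p : ℝ × ℝ => g p.1 p.2) (Metric.closedBall x₂ b ×ˢ I))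
    (hgl : ∀ y ∈ I, ∀ u ∈ Metric.closedBall x₂ b, ∀ v ∈ Metric.closedBall x₂ b,
      |g u y - g v y| ≤ (K / b) * |u - v|)
    (hgb : ∀ u ∈ Metric.closedBall x₂ b, ∀ y ∈ I, ε ≤ g u y ∧ g u y ≤ K)
    (hx : x₂ - x₁ ∈ Set.Ioo 0 ((b / K) * ε))
    (ψ : ℝ → ℝ) (hψ : C1on (-(b/K)) 0 ψ) (hψI : ∀ t ∈ Set.Icc (-(b/K)) 0, ψ t ∈ I) :
    ∃ y : ℝ → ℝ,
      (ContinuousOn y (Set.Icc 0 (b/K)) ∧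
        (∀ s ∈ Set.Icc (0:ℝ) (b/K), y s ∈ Metric.closedBall x₂ b) ∧
        y 0 = x₂ ∧
        (∀ s ∈ Set.Icc (0:ℝ) (b/K),
          HasDerivWithinAt y (-(g (y s) (ψ (-s)))) (Set.Icc 0 (b/K)) s)) ∧
      (∀ z : ℝ → ℝ,
        (ContinuousOn z (Set.Icc 0 (b/K)) ∧
          (∀ s ∈ Set.Icc (0:ℝ) (b/K), z s ∈ Metric.closedBall x₂ b) ∧
          z 0 = x₂ ∧
          (∀ s ∈ Set.Icc (0:ℝ) (b/K),
            HasDerivWithinAt z (-(g (z s) (ψ (-s)))) (Set.Icc 0 (b/K)) s)) →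
        ∀ s ∈ Set.Icc (0:ℝ) (b/K), z s = y s) ∧
      (∃! τ : ℝ, τ ∈ Set.Ioo 0 (b/K) ∧ y τ = x₁) := by
  set T : ℝ := b / K with hTdef
  have hT : 0 < T := div_pos hb hK
  have hKT : K * T = b := by rw [hTdef]; field_simp
  set B := Metric.closedBall x₂ b with hBdef
  have hBIcc : B = Set.Icc (x₂ - b) (x₂ + b) := Real.closedBall_eq_Icc
  -- projection onto the ball
  set px : ℝ → ℝ := fun x => min (max x (x₂ - b)) (x₂ + b) with hpx
  set pt : ℝ → ℝ := fun t => min (max t 0) T with hpt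
  have hpx_mem : ∀ x, px x ∈ B := by
    intro x
    rw [hBIcc]
    constructor
    · exact le_min (le_trans (le_max_right _ _) le_rfl) (by linarith)
    · exact min_le_right _ _
  have hpx_eq : ∀ x ∈ B, px x = x := by
    intro x hxB
    rw [hBIcc] at hxB
    simp only [hpx]
    rw [max_eq_left hxB.1, min_eq_left hxB.2]
  have hpt_mem : ∀ t, pt t ∈ Set.Icc (0:ℝ) T := by
    intro t
    exact ⟨le_min (le_max_right _ _) hT.le, min_le_right _ _⟩
  have hpt_eq : ∀ t ∈ Set.Icc (0:ℝ) T, pt t = t := by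
    intro t ht
    simp only [hpt]
    rw [max_eq_left ht.1, min_eq_left ht.2]
  have hψmem : ∀ t, ψ (-(pt t)) ∈ I := by
    intro t
    apply hψI
    have := hpt_mem t
    exact ⟨by linarith [this.2], by linarith [this.1]⟩
  -- the modified vector field
  set v : ℝ → ℝ → ℝ := fun t x => -(g (px x) (ψ (-(pt t)))) with hv
  have hvnorm : ∀ t x, ‖v t x‖ ≤ K := by
    intro t x
    have h := hgb (px x) (hpx_mem x) (ψ (-(pt t))) (hψmem t)
    rw [Real.norm_eq_abs, abs_neg, abs_of_nonneg (le_trans hε.le h.1)]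
    exact h.2
  set L : NNReal := ⟨K / b, (div_pos hK hb).le⟩ with hL
  have hpxL : LipschitzWith 1 px := (LipschitzWith.id.max_const _).min_const _
  have hpx_lip : ∀ u w : ℝ, |px u - px w| ≤ |u - w| := by
    intro u w
    simpa [Real.dist_eq] using hpxL.dist_le_mul u w
  have hvlip : ∀ t, LipschitzWith L (v t) := by
    intro t
    apply LipschitzWith.of_dist_le_mul
    intro u w
    simp only [hv, Real.dist_eq, neg_sub_neg]
    have h1 := hgl (ψ (-(pt t))) (hψmem t) (px w) (hpx_mem w) (px u) (hpx_mem u)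
    have h2 := hpx_lip w u
    have hKb : (0:ℝ) ≤ K / b := (div_pos hK hb).le
    calc |g (px w) (ψ (-(pt t))) - g (px u) (ψ (-(pt t)))| ≤ (K / b) * |px w - px u| := h1
      _ ≤ (K / b) * |w - u| := by nlinarith [abs_nonneg (px w - px u)]
      _ = (L : ℝ) * |u - w| := by rw [abs_sub_comm]; rfl
  have hψc : ContinuousOn ψ (Set.Icc (-T) 0) := hψ.1
  have hptc : Continuous pt := (continuous_id.max continuous_const).min continuous_const
  have hψptc : Continuous (fun t => ψ (-(pt t))) := by
    apply hψc.comp_continuous (hptc.neg)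
    intro t
    have := hpt_mem t
    exact ⟨by linarith [this.2, show (-pt) t = -(pt t) from rfl], by linarith [this.1, show (-pt) t = -(pt t) from rfl]⟩
  have hvcont : ∀ x ∈ B, ContinuousOn (fun t => v t x) (Set.Icc (0:ℝ) T) := by
    intro x hxB
    apply ContinuousOn.neg
    have : ContinuousOn (fun t : ℝ => (px x, ψ (-(pt t)))) (Set.Icc (0:ℝ) T) :=
      (continuousOn_const.prodMk hψptc.continuousOn)
    exact hgc.comp this (fun t _ => ⟨hpx_mem x, hψmem t⟩)
  have hpl : IsPicardLindelof v (tmin := 0) (tmax := T) ⟨0, le_rfl, hT.le⟩ x₂ ⟨b, hb.le⟩ 0 ⟨K, hK.le⟩ L := by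
    refine ⟨fun t _ => (hvlip t).lipschitzOnWith, fun x hx => hvcont x hx,
      fun t _ x _ => hvnorm t x, ?_⟩
    simp only [NNReal.coe_mk, NNReal.coe_zero, sub_zero, sub_self, max_eq_left hT.le, hKT, le_refl]
    exact hKT.le
  obtain ⟨f, hf0, hfd⟩ : ∃ f : ℝ → ℝ, f 0 = x₂ ∧
      ∀ t ∈ Set.Icc (0:ℝ) T, HasDerivWithinAt f (v t (f t)) (Set.Icc 0 T) t :=
    hpl.exists_eq_forall_mem_Icc_hasDerivWithinAt₀
  have hcont : ContinuousOn f (Set.Icc 0 T) := fun t ht => (hfd t ht).continuousWithinAt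
  have hmem : ∀ t ∈ Set.Icc (0:ℝ) T, f t ∈ B := by
    intro t ht
    have hbound := Convex.norm_image_sub_le_of_norm_hasDerivWithin_le
      (f := f) (f' := fun t => v t (f t)) (s := Set.Icc (0:ℝ) T)
      hfd (fun s _ => hvnorm s (f s)) (convex_Icc 0 T) ⟨le_rfl, hT.le⟩ ht
    rw [hf0] at hbound
    rw [hBdef, Metric.mem_closedBall, Real.dist_eq]
    have : ‖t - 0‖ ≤ T := by
      rw [Real.norm_eq_abs, sub_zero, abs_of_nonneg ht.1]; exact ht.2
    calc |f t - x₂| = ‖f t - x₂‖ := rfl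
      _ ≤ K * ‖t - 0‖ := hbound
      _ ≤ K * T := by nlinarith
      _ = b := hKT
  have hveq : ∀ z : ℝ → ℝ, ∀ t ∈ Set.Icc (0:ℝ) T, z t ∈ B → v t (z t) = -(g (z t) (ψ (-t))) := by
    intro z t ht hzB
    simp only [hv]
    rw [hpx_eq _ hzB, hpt_eq t ht]
  have hfd' : ∀ t ∈ Set.Icc (0:ℝ) T, HasDerivWithinAt f (-(g (f t) (ψ (-t)))) (Set.Icc 0 T) t := by
    intro t ht
    have := hfd t ht
    rwa [hveq f t ht (hmem t ht)] at this
  refine ⟨f, ⟨hcont, hmem, hf0, hfd'⟩, ?_, ?_⟩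
  · -- uniqueness
    rintro z ⟨hzc, hzmem, hz0, hzd⟩ s hs
    have key : EqOn z f (Set.Icc 0 T) := by
      apply ODE_solution_unique_of_mem_Icc_right (v := v) (s := fun _ => B) (K := L)
        (fun t _ => fun p _ q _ => (hvlip t) p q) hzc ?_ (fun t ht => hzmem t (Ico_subset_Icc_self ht))
        hcont ?_ (fun t ht => hmem t (Ico_subset_Icc_self ht)) (by rw [hz0, hf0])
      · intro t ht
        have h1 := hzd t (Ico_subset_Icc_self ht)
        rw [← hveq z t (Ico_subset_Icc_self ht) (hzmem t (Ico_subset_Icc_self ht))] at h1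
        exact h1.mono_of_mem_nhdsWithin (Icc_mem_nhdsGE_of_mem ht)
      · intro t ht
        exact (hfd t (Ico_subset_Icc_self ht)).mono_of_mem_nhdsWithin (Icc_mem_nhdsGE_of_mem ht)
    exact key hs
  · -- hitting time
    have hderiv_at : ∀ x ∈ Set.Ioo (0:ℝ) T, HasDerivAt f (-(g (f x) (ψ (-x)))) x := by
      intro x hxm
      exact (hfd' x (Ioo_subset_Icc_self hxm)).hasDerivAt (Icc_mem_nhds hxm.1 hxm.2)
    have hpos : ∀ x ∈ Set.Ioo (0:ℝ) T, ε ≤ g (f x) (ψ (-x)) ∧ g (f x) (ψ (-x)) ≤ K := by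
      intro x hxm
      apply hgb _ (hmem x (Ioo_subset_Icc_self hxm))
      apply hψI
      exact ⟨by linarith [hxm.2], by linarith [hxm.1]⟩
    have hanti : StrictAntiOn f (Set.Icc 0 T) := by
      apply strictAntiOn_of_deriv_neg (convex_Icc 0 T) hcont
      intro x hx
      rw [interior_Icc] at hx
      rw [(hderiv_at x hx).deriv]
      have := (hpos x hx).1
      linarith
    -- f T ≤ x₂ - ε * T
    have hfT : f T ≤ x₂ - ε * T := by
      have hh : AntitoneOn (fun s => f s + ε * s) (Set.Icc 0 T) := by
        apply antitoneOn_of_deriv_nonpos (convex_Icc 0 T)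
        · exact hcont.add (continuous_const.mul continuous_id).continuousOn
        · intro x hx
          rw [interior_Icc] at hx
          have hD : HasDerivAt (fun s => f s + ε * s) (-g (f x) (ψ (-x)) + ε) x := by
            exact ((hderiv_at x hx).add ((hasDerivAt_id' x).const_mul ε)).congr_deriv (by ring)
          exact hD.differentiableAt.differentiableWithinAt
        · intro x hx
          rw [interior_Icc] at hx
          have hD : HasDerivAt (fun s => f s + ε * s) (-g (f x) (ψ (-x)) + ε) x := by
            exact ((hderiv_at x hx).add ((hasDerivAt_id' x).const_mul ε)).congr_deriv (by ring)
          rw [hD.deriv]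
          have := (hpos x hx).1
          linarith
      have := hh ⟨le_rfl, hT.le⟩ ⟨hT.le, le_rfl⟩ hT.le
      simp only [hf0, mul_zero, add_zero] at this
      linarith
    have hfTlt : f T < x₁ := by
      nlinarith [hx.2, hfT]
    have hf0gt : x₁ < f 0 := by rw [hf0]; linarith [hx.1]
    have hiv : x₁ ∈ Set.Icc (f T) (f 0) := ⟨hfTlt.le, hf0gt.le⟩
    obtain ⟨τ, hτm, hτe⟩ := intermediate_value_Icc' hT.le hcont hiv
    have hτ0 : τ ≠ 0 := by
      intro h; rw [h, hf0] at hτe; linarith [hx.1]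
    have hτT : τ ≠ T := by
      intro h; rw [h] at hτe; linarith
    have hτIoo : τ ∈ Set.Ioo (0:ℝ) T :=
      ⟨lt_of_le_of_ne hτm.1 (Ne.symm hτ0), lt_of_le_of_ne hτm.2 hτT⟩
    refine ⟨τ, ⟨hτIoo, hτe⟩, ?_⟩
    rintro τ' ⟨hτ'Ioo, hτ'e⟩
    apply hanti.injOn (Ioo_subset_Icc_self hτ'Ioo) hτm
    rw [hτe, hτ'e]
end

section
/- Let J, I ⊆ ℝ be open, h > 0, and k : J × I → ℝ continuously differentiable. Fix ψ ∈ C¹([-h,0],I) and z̄ ∈ C¹([0,h],J). Then sup_{s∈[0,h]} | k(z(s), ψ(−s)) − k(z̄(s), ψ(−s)) − ∂₁k(z̄(s), ψ(−s)) (z(s) − z̄(s)) | = o(‖z − z̄‖¹) as ‖z − z̄‖¹ → 0 over z ∈ C¹([0,h],J). -/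
open Set

/-- Partial derivative in the first argument. -/
noncomputable def p1 (k : ℝ → ℝ → ℝ) (x y : ℝ) : ℝ := deriv (fun x' => k x' y) x

/-- Partial derivative in the second argument. -/
noncomputable def p2 (k : ℝ → ℝ → ℝ) (x y : ℝ) : ℝ := deriv (fun y' => k x y') y

/-- for C¹ k and fixed ψ, z̄, the first-order Taylor remainder of
z ↦ k(z(·),ψ(-·)) is o(‖z - z̄‖¹) uniformly on [0,h]. -/
theorem stmt7 (J I : Set ℝ) (hJ : IsOpen J) (hI : IsOpen I) (h : ℝ) (hh : 0 < h)
    (k : ℝ → ℝ → ℝ) (hk : ContDiffOn ℝ 1 (fun p : ℝ × ℝ => k p.1 p.2) (J ×ˢ I))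
    (ψ : ℝ → ℝ) (hψ : C1on (-h) 0 ψ) (hψI : ∀ t ∈ Set.Icc (-h) 0, ψ t ∈ I)
    (zb : ℝ → ℝ) (hzb : C1on 0 h zb) (hzbJ : ∀ s ∈ Set.Icc (0:ℝ) h, zb s ∈ J) :
    ∀ ε > 0, ∃ δ > 0, ∀ z : ℝ → ℝ, C1on 0 h z → (∀ s ∈ Set.Icc (0:ℝ) h, z s ∈ J) →
      nC1 0 h (z - zb) ≤ δ →
      (⨆ s : Set.Icc (0:ℝ) h, |k (z s.1) (ψ (-s.1)) - k (zb s.1) (ψ (-s.1)) -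
        p1 k (zb s.1) (ψ (-s.1)) * (z s.1 - zb s.1)|) ≤ ε * nC1 0 h (z - zb) := by
  intro ε hε
  set F : ℝ × ℝ → ℝ := fun p => k p.1 p.2 with hF
  set γ : ℝ → ℝ × ℝ := fun s => (zb s, ψ (-s)) with hγ
  have hmaps : MapsTo (fun s : ℝ => -s) (Icc 0 h) (Icc (-h) 0) := by
    intro s hs
    simp only [mem_Icc] at hs ⊢
    constructor <;> linarith
  have hγcont : ContinuousOn γ (Icc 0 h) :=
    ContinuousOn.prodMk hzb.1 ((hψ.1).comp continuous_neg.continuousOn hmaps)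
  have hΓcomp : IsCompact (γ '' Icc 0 h) := isCompact_Icc.image_of_continuousOn hγcont
  have hΓsub : γ '' Icc 0 h ⊆ J ×ˢ I := by
    rintro _ ⟨s, hs, rfl⟩
    exact ⟨hzbJ s hs, hψI _ (hmaps hs)⟩
  obtain ⟨r, hr, hrsub⟩ := hΓcomp.exists_cthickening_subset_open (hJ.prod hI) hΓsub
  set K := Metric.cthickening r (γ '' Icc 0 h) with hK
  have hKcomp : IsCompact K := hΓcomp.cthickening
  have hKsub : K ⊆ J ×ˢ I := hrsub
  have hFdiff : ∀ p ∈ J ×ˢ I, HasFDerivAt F (fderiv ℝ F p) p := fun p hp =>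
    ((hk.contDiffAt ((hJ.prod hI).mem_nhds hp)).differentiableAt one_ne_zero).hasFDerivAt
  have hgcont : ContinuousOn (fderiv ℝ F) (J ×ˢ I) :=
    hk.continuousOn_fderiv_of_isOpen (hJ.prod hI) le_rfl
  have hunif : UniformContinuousOn (fderiv ℝ F) K :=
    hKcomp.uniformContinuousOn_of_continuous (hgcont.mono hKsub)
  rw [Metric.uniformContinuousOn_iff_le] at hunif
  obtain ⟨δ₁, hδ₁, hδ₁e⟩ := hunif ε hε
  have hp1 : ∀ p ∈ J ×ˢ I, p1 k p.1 p.2 = fderiv ℝ F p (1, 0) := by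
    intro p hp
    have h1 : HasDerivAt (fun x' : ℝ => (x', p.2)) ((1 : ℝ), (0 : ℝ)) p.1 :=
      (hasDerivAt_id p.1).prodMk (hasDerivAt_const p.1 p.2)
    have h2 : HasDerivAt (fun x' => k x' p.2) (fderiv ℝ F p (1, 0)) p.1 :=
      by have := (hFdiff p hp).comp_hasDerivAt p.1 h1; exact this
    exact h2.deriv
  refine ⟨min δ₁ r, lt_min hδ₁ hr, ?_⟩
  intro z hz hzJ hsmall
  have hne : Nonempty (Icc (0:ℝ) h) := ⟨⟨0, le_refl 0, hh.le⟩⟩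
  have hdcont : ContinuousOn (fun s => ‖(z - zb) s‖) (Icc 0 h) := (hz.1.sub hzb.1).norm
  have hbdd : BddAbove (Set.range fun t : Icc (0:ℝ) h => ‖(z - zb) t.1‖) := by
    have heq : (Set.range fun t : Icc (0:ℝ) h => ‖(z - zb) t.1‖)
        = (fun s => ‖(z - zb) s‖) '' Icc 0 h := (Set.image_eq_range (fun s : ℝ => ‖(z - zb) s‖) (Icc 0 h)).symm
    rw [heq]
    exact (isCompact_Icc.image_of_continuousOn hdcont).bddAbove
  have hsupnn : 0 ≤ supN 0 h (derivWithin (z - zb) (Icc 0 h)) :=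
    Real.iSup_nonneg fun _ => norm_nonneg _
  have hM : ∀ s ∈ Icc (0:ℝ) h, |z s - zb s| ≤ nC1 0 h (z - zb) := by
    intro s hs
    have h1 : ‖(z - zb) s‖ ≤ supN 0 h (z - zb) := le_ciSup hbdd ⟨s, hs⟩
    have h2 : ‖(z - zb) s‖ = |z s - zb s| := by simp [Real.norm_eq_abs]
    rw [h2] at h1
    unfold nC1
    linarith
  have hNnn : 0 ≤ nC1 0 h (z - zb) := le_trans (abs_nonneg _) (hM 0 ⟨le_refl 0, hh.le⟩)
  refine ciSup_le ?_
  rintro ⟨s, hs⟩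
  set y := ψ (-s) with hy
  set x0 := zb s with hx0
  set dd := z s - zb s with hdd
  have hdN : |dd| ≤ nC1 0 h (z - zb) := hM s hs
  have hdδ : |dd| ≤ min δ₁ r := le_trans hdN hsmall
  set p : ℝ → ℝ × ℝ := fun t => (x0 + t * dd, y) with hp
  have hdist : ∀ t ∈ Icc (0:ℝ) 1, dist (p t) (γ s) ≤ |dd| := by
    intro t ht
    have : dist (p t) (γ s) = max |t * dd| 0 := by
      simp [hp, hγ, Prod.dist_eq, Real.dist_eq, hx0, hy]
    rw [this, max_eq_left (abs_nonneg _), abs_mul]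
    calc |t| * |dd| ≤ 1 * |dd| := by
          apply mul_le_mul_of_nonneg_right _ (abs_nonneg _)
          rw [abs_of_nonneg ht.1]; exact ht.2
      _ = |dd| := one_mul _
  have hpK : ∀ t ∈ Icc (0:ℝ) 1, p t ∈ K := by
    intro t ht
    exact Metric.mem_cthickening_of_dist_le (p t) (γ s) r _ ⟨s, hs, rfl⟩
      (le_trans (hdist t ht) (le_trans hdδ (min_le_right _ _)))
  have hγsK : γ s ∈ K := Metric.self_subset_cthickening _ ⟨s, hs, rfl⟩
  set L0 := fderiv ℝ F (γ s) with hL0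
  set φ : ℝ → ℝ := fun t => F (p t) - t * (L0 (1, 0) * dd) with hφ
  have hφderiv : ∀ t ∈ Icc (0:ℝ) 1,
      HasDerivWithinAt φ (fderiv ℝ F (p t) (dd, 0) - L0 (1, 0) * dd) (Icc 0 1) t := by
    intro t ht
    have h1 : HasDerivAt p ((dd : ℝ), (0 : ℝ)) t := by
      have ha : HasDerivAt (fun t : ℝ => x0 + t * dd) dd t := by
        simpa using ((hasDerivAt_id t).mul_const dd).const_add x0
      exact ha.prodMk (hasDerivAt_const t y)
    have h2 : HasDerivAt (fun t => F (p t)) (fderiv ℝ F (p t) (dd, 0)) t :=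
      (hFdiff (p t) (hKsub (hpK t ht))).comp_hasDerivAt t h1
    have h3 : HasDerivAt (fun t : ℝ => t * (L0 (1, 0) * dd)) (L0 (1, 0) * dd) t := by
      simpa using (hasDerivAt_id t).mul_const (L0 (1, 0) * dd)
    exact (h2.sub h3).hasDerivWithinAt
  have hbound : ∀ t ∈ Ico (0:ℝ) 1,
      ‖fderiv ℝ F (p t) (dd, 0) - L0 (1, 0) * dd‖ ≤ ε * |dd| := by
    intro t ht
    have htI : t ∈ Icc (0:ℝ) 1 := ⟨ht.1, ht.2.le⟩
    have hsm : ((dd : ℝ), (0 : ℝ)) = dd • ((1 : ℝ), (0 : ℝ)) := by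
      simp [Prod.smul_mk, smul_eq_mul]
    have heq : fderiv ℝ F (p t) (dd, 0) - L0 (1, 0) * dd
        = ((fderiv ℝ F (p t) - L0) (1, 0)) * dd := by
      rw [hsm, map_smul]
      simp [ContinuousLinearMap.sub_apply, smul_eq_mul]
      ring
    rw [heq]
    have hop : ‖(fderiv ℝ F (p t) - L0) (1, 0)‖ ≤ ‖fderiv ℝ F (p t) - L0‖ := by
      have := (fderiv ℝ F (p t) - L0).le_opNorm ((1 : ℝ), (0 : ℝ))
      have hn1 : ‖((1 : ℝ), (0 : ℝ))‖ = 1 := by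
        rw [Prod.norm_def]; simp
      rw [hn1, mul_one] at this
      exact this
    have hclose : ‖fderiv ℝ F (p t) - L0‖ ≤ ε := by
      have hd : dist (p t) (γ s) ≤ δ₁ :=
        le_trans (hdist t htI) (le_trans hdδ (min_le_left _ _))
      have := hδ₁e (p t) (hpK t htI) (γ s) hγsK hd
      rwa [dist_eq_norm] at this
    calc ‖(fderiv ℝ F (p t) - L0) (1, 0) * dd‖
        = ‖(fderiv ℝ F (p t) - L0) (1, 0)‖ * |dd| := by
          rw [norm_mul, Real.norm_eq_abs dd]
      _ ≤ ε * |dd| := by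
          apply mul_le_mul_of_nonneg_right _ (abs_nonneg _)
          exact le_trans hop hclose
  have hmvt := norm_image_sub_le_of_norm_deriv_le_segment' hφderiv hbound 1
    ⟨zero_le_one, le_refl 1⟩
  have hφ1 : φ 1 - φ 0 = k (z s) y - k (zb s) y - L0 (1, 0) * dd := by
    simp [hφ, hp, hF, hx0, hdd]
    ring_nf
  have hp1eq : p1 k (zb s) y = L0 (1, 0) := by
    have := hp1 (γ s) (hΓsub ⟨s, hs, rfl⟩)
    simpa [hγ, hy] using this
  have hrem : |k (z s) y - k (zb s) y - p1 k (zb s) y * dd| ≤ ε * |dd| := by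
    rw [hp1eq, ← hφ1]
    have : ‖φ 1 - φ 0‖ ≤ ε * |dd| * (1 - 0) := hmvt
    simpa using this
  calc |k (z s) (ψ (-s)) - k (zb s) (ψ (-s)) - p1 k (zb s) (ψ (-s)) * (z s - zb s)|
      ≤ ε * |dd| := hrem
    _ ≤ ε * nC1 0 h (z - zb) := mul_le_mul_of_nonneg_left hdN hε.le
end

section
/- Let J, I ⊆ ℝ be open, h > 0, and k : J × I → ℝ be C¹. Define I^k : C¹([0,h],J) × C¹([-h,0],I) × (0,h) → ℝ by I^k(z,ψ,τ) = ∫_0^τ k(z(s),ψ(−s)) ds. Then I^k is continuously (Fréchet) differentiable, with derivative at (z,ψ,τ) acting on (u,χ,s) ∈ C¹([0,h],ℝ) × C¹([-h,0],ℝ) × ℝ by DI^k(z,ψ,τ)(u,χ,s) = ∫_0^τ ∂₁k(z(σ),ψ(−σ)) u(σ) dσ + ∫_0^τ ∂₂k(z(σ),ψ(−σ)) χ(−σ) dσ + k(z(τ),ψ(−τ)) s. -/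
open Set

/-- The functional I^k(z,ψ,τ) = ∫₀^τ k(z(s),ψ(-s)) ds. -/
noncomputable def Ik (k : ℝ → ℝ → ℝ) (z ψ : ℝ → ℝ) (τ : ℝ) : ℝ :=
  ∫ s in (0:ℝ)..τ, k (z s) (ψ (-s))

/-- The candidate Fréchet derivative of I^k at (z,ψ,τ) applied to (u,χ,s). -/
noncomputable def DIk (k : ℝ → ℝ → ℝ) (z ψ : ℝ → ℝ) (τ : ℝ) (u χ : ℝ → ℝ) (s : ℝ) : ℝ :=
  (∫ σ in (0:ℝ)..τ, p1 k (z σ) (ψ (-σ)) * u σ) +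
  (∫ σ in (0:ℝ)..τ, p2 k (z σ) (ψ (-σ)) * χ (-σ)) +
  k (z τ) (ψ (-τ)) * s

/-- Membership in the domain C¹([0,h],J) × C¹([-h,0],I) × (0,h). -/
def DomIk (J I : Set ℝ) (h : ℝ) (z ψ : ℝ → ℝ) (τ : ℝ) : Prop :=
  C1on 0 h z ∧ (∀ u ∈ Set.Icc (0:ℝ) h, z u ∈ J) ∧
  C1on (-h) 0 ψ ∧ (∀ u ∈ Set.Icc (-h) 0, ψ u ∈ I) ∧ τ ∈ Set.Ioo (0:ℝ) h


lemma supN_nonneg {X : Type*} [NormedAddCommGroup X] (a b : ℝ) (f : ℝ → X) : 0 ≤ supN a b f :=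
  Real.iSup_nonneg fun _ => norm_nonneg _

lemma norm_le_supN {X : Type*} [NormedAddCommGroup X] {a b : ℝ} {f : ℝ → X}
    (hf : ContinuousOn f (Icc a b)) {t : ℝ} (ht : t ∈ Icc a b) : ‖f t‖ ≤ supN a b f := by
  obtain ⟨C, hC⟩ := isCompact_Icc.exists_bound_of_continuousOn hf
  exact le_ciSup ⟨C, by rintro y ⟨t', rfl⟩; exact hC t'.1 t'.2⟩ (⟨t, ht⟩ : Icc a b)

lemma supN_le_nC1 {X : Type*} [NormedAddCommGroup X] [NormedSpace ℝ X] (a b : ℝ) (f : ℝ → X) :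
    supN a b f ≤ nC1 a b f := le_add_of_nonneg_right (supN_nonneg _ _ _)

lemma C1on.lip {a b : ℝ} {f : ℝ → ℝ} (hf : C1on a b f) {s t : ℝ}
    (hs : s ∈ Icc a b) (ht : t ∈ Icc a b) :
    |f s - f t| ≤ supN a b (derivWithin f (Icc a b)) * |s - t| :=
  Convex.norm_image_sub_le_of_norm_derivWithin_le hf.2.1
    (fun x hx => norm_le_supN hf.2.2 hx) (convex_Icc a b) ht hs

lemma neg_mapsTo {h : ℝ} : MapsTo Neg.neg (Icc (0:ℝ) h) (Icc (-h) 0) :=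
  fun σ hσ => ⟨neg_le_neg hσ.2, neg_nonpos.2 hσ.1⟩

lemma pair_contOn {h : ℝ} {z ψ : ℝ → ℝ} (hz : ContinuousOn z (Icc 0 h))
    (hψ : ContinuousOn ψ (Icc (-h) 0)) :
    ContinuousOn (fun σ => (z σ, ψ (-σ))) (Icc (0:ℝ) h) :=
  hz.prodMk (hψ.comp continuous_neg.continuousOn neg_mapsTo)

lemma pair_mapsTo {J I : Set ℝ} {h : ℝ} {z ψ : ℝ → ℝ} (hzJ : ∀ u ∈ Icc (0:ℝ) h, z u ∈ J)
    (hψI : ∀ u ∈ Icc (-h) (0:ℝ), ψ u ∈ I) :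
    MapsTo (fun σ => (z σ, ψ (-σ))) (Icc (0:ℝ) h) (J ×ˢ I) :=
  fun σ hσ => Set.mk_mem_prod (hzJ σ hσ) (hψI (-σ) (neg_mapsTo hσ))

lemma p1_eq {J I : Set ℝ} (hJ : IsOpen J) (hI : IsOpen I) {k : ℝ → ℝ → ℝ}
    (hk : ContDiffOn ℝ 1 (fun p : ℝ × ℝ => k p.1 p.2) (J ×ˢ I)) {x y : ℝ}
    (hx : x ∈ J) (hy : y ∈ I) :
    p1 k x y = fderiv ℝ (fun p : ℝ × ℝ => k p.1 p.2) (x, y) (1, 0) := by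
  have hmem : (x, y) ∈ J ×ˢ I := Set.mk_mem_prod hx hy
  have hdf : HasFDerivAt (fun p : ℝ × ℝ => k p.1 p.2)
      (fderiv ℝ (fun p : ℝ × ℝ => k p.1 p.2) (x, y)) (x, y) :=
    ((hk.differentiableOn one_ne_zero).differentiableAt ((hJ.prod hI).mem_nhds hmem)).hasFDerivAt
  have h1 : HasDerivAt (fun x' : ℝ => ((x' : ℝ), y)) ((1 : ℝ), (0 : ℝ)) x :=
    HasDerivAt.prodMk (hasDerivAt_id x) (hasDerivAt_const x y)
  exact (hdf.comp_hasDerivAt x h1).deriv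

lemma p2_eq {J I : Set ℝ} (hJ : IsOpen J) (hI : IsOpen I) {k : ℝ → ℝ → ℝ}
    (hk : ContDiffOn ℝ 1 (fun p : ℝ × ℝ => k p.1 p.2) (J ×ˢ I)) {x y : ℝ}
    (hx : x ∈ J) (hy : y ∈ I) :
    p2 k x y = fderiv ℝ (fun p : ℝ × ℝ => k p.1 p.2) (x, y) (0, 1) := by
  have hmem : (x, y) ∈ J ×ˢ I := Set.mk_mem_prod hx hy
  have hdf : HasFDerivAt (fun p : ℝ × ℝ => k p.1 p.2)
      (fderiv ℝ (fun p : ℝ × ℝ => k p.1 p.2) (x, y)) (x, y) :=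
    ((hk.differentiableOn one_ne_zero).differentiableAt ((hJ.prod hI).mem_nhds hmem)).hasFDerivAt
  have h1 : HasDerivAt (fun y' : ℝ => ((x : ℝ), y')) ((0 : ℝ), (1 : ℝ)) y :=
    HasDerivAt.prodMk (hasDerivAt_const y x) (hasDerivAt_id y)
  exact (hdf.comp_hasDerivAt y h1).deriv

lemma clm_decomp (L : ℝ × ℝ →L[ℝ] ℝ) (v w : ℝ) : L (v, w) = v * L (1, 0) + w * L (0, 1) := by
  have hvw : ((v, w) : ℝ × ℝ) = v • ((1:ℝ), (0:ℝ)) + w • ((0:ℝ), (1:ℝ)) := by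
    simp [Prod.ext_iff]
  rw [hvw, map_add, map_smul, map_smul, smul_eq_mul, smul_eq_mul]

lemma apply_le_opNorm₂ (L : ℝ × ℝ →L[ℝ] ℝ) (v w : ℝ) : |L (v, w)| ≤ ‖L‖ * max |v| |w| := by
  simpa [Prod.norm_def] using L.le_opNorm (v, w)

lemma uIoc_dist {τ τ' σ : ℝ} (hσ : σ ∈ Set.uIoc τ τ') : |σ - τ| ≤ |τ' - τ| := by
  rcases Set.mem_uIoc.1 hσ with ⟨h1, h2⟩ | ⟨h1, h2⟩ <;>
    rcases abs_cases (τ' - τ) with ⟨e, he⟩ | ⟨e, he⟩ <;> rw [abs_sub_le_iff] <;>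
    constructor <;> linarith

lemma uIoc_mem_Icc {τ τ' σ h : ℝ} (hτ : τ ∈ Icc (0:ℝ) h) (hτ' : τ' ∈ Icc (0:ℝ) h)
    (hσ : σ ∈ Set.uIoc τ τ') : σ ∈ Icc (0:ℝ) h := by
  rcases Set.mem_uIoc.1 hσ with ⟨h1, h2⟩ | ⟨h1, h2⟩ <;>
    exact ⟨by linarith [hτ.1, hτ'.1], by linarith [hτ.2, hτ'.2]⟩

lemma seg_est {a b c : ℝ × ℝ} (hc : c ∈ segment ℝ a b) :
    |c.1 - a.1| ≤ |b.1 - a.1| ∧ |c.2 - a.2| ≤ |b.2 - a.2| := by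
  obtain ⟨t1, t2, ht1, ht2, hsum, rfl⟩ := hc
  constructor
  · have h1 : (t1 • a + t2 • b).1 - a.1 = t2 * (b.1 - a.1) := by
      show t1 * a.1 + t2 * b.1 - a.1 = _
      linear_combination a.1 * hsum
    rw [h1, abs_mul, abs_of_nonneg ht2]
    nlinarith [abs_nonneg (b.1 - a.1)]
  · have h1 : (t1 • a + t2 • b).2 - a.2 = t2 * (b.2 - a.2) := by
      show t1 * a.2 + t2 * b.2 - a.2 = _
      linear_combination a.2 * hsum
    rw [h1, abs_mul, abs_of_nonneg ht2]
    nlinarith [abs_nonneg (b.2 - a.2)]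

lemma setup {J I : Set ℝ} (hJ : IsOpen J) (hI : IsOpen I) {h : ℝ} {z ψ : ℝ → ℝ}
    (hz : C1on 0 h z) (hzJ : ∀ u ∈ Icc (0:ℝ) h, z u ∈ J)
    (hψ : C1on (-h) 0 ψ) (hψI : ∀ u ∈ Icc (-h) (0:ℝ), ψ u ∈ I) :
    ∃ (K : Set (ℝ × ℝ)) (r : ℝ), IsCompact K ∧ 0 < r ∧ K ⊆ J ×ˢ I ∧
      (∀ x y : ℝ, (∃ σ ∈ Icc (0:ℝ) h, |x - z σ| ≤ r) →
        (∃ σ ∈ Icc (-h) (0:ℝ), |y - ψ σ| ≤ r) → (x, y) ∈ K) := by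
  have hKz : IsCompact (z '' Icc 0 h) := isCompact_Icc.image_of_continuousOn hz.1
  have hKψ : IsCompact (ψ '' Icc (-h) 0) := isCompact_Icc.image_of_continuousOn hψ.1
  obtain ⟨rz, hrz, hrzs⟩ := hKz.exists_cthickening_subset_open hJ (image_subset_iff.2 hzJ)
  obtain ⟨rψ, hrψ, hrψs⟩ := hKψ.exists_cthickening_subset_open hI (image_subset_iff.2 hψI)
  refine ⟨Metric.cthickening (min rz rψ) (z '' Icc 0 h) ×ˢ
      Metric.cthickening (min rz rψ) (ψ '' Icc (-h) 0), min rz rψ,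
    hKz.cthickening.prod hKψ.cthickening, lt_min hrz hrψ,
    Set.prod_mono ((Metric.cthickening_mono (min_le_left _ _) _).trans hrzs)
      ((Metric.cthickening_mono (min_le_right _ _) _).trans hrψs), ?_⟩
  rintro x y ⟨σ, hσ, hxσ⟩ ⟨σ', hσ', hyσ⟩
  exact Set.mk_mem_prod
    (Metric.mem_cthickening_of_dist_le x (z σ) _ _ ⟨σ, hσ, rfl⟩ (by rwa [Real.dist_eq]))
    (Metric.mem_cthickening_of_dist_le y (ψ σ') _ _ ⟨σ', hσ', rfl⟩ (by rwa [Real.dist_eq]))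

set_option maxHeartbeats 1600000 in
lemma part1 {J I : Set ℝ} (hJ : IsOpen J) (hI : IsOpen I) {h : ℝ} (hh : 0 < h)
    {k : ℝ → ℝ → ℝ} (hk : ContDiffOn ℝ 1 (fun p : ℝ × ℝ => k p.1 p.2) (J ×ˢ I))
    {z ψ : ℝ → ℝ} {τ : ℝ} (hdom : DomIk J I h z ψ τ) {ε : ℝ} (hε : 0 < ε) :
    ∃ δ > 0, ∀ z' ψ' : ℝ → ℝ, ∀ τ' : ℝ, DomIk J I h z' ψ' τ' →
      nC1 0 h (z' - z) ≤ δ → nC1 (-h) 0 (ψ' - ψ) ≤ δ → |τ' - τ| ≤ δ →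
      |Ik k z' ψ' τ' - Ik k z ψ τ - DIk k z ψ τ (z' - z) (ψ' - ψ) (τ' - τ)| ≤
        ε * (nC1 0 h (z' - z) + nC1 (-h) 0 (ψ' - ψ) + |τ' - τ|) := by
  obtain ⟨hz, hzJ, hψ, hψI, hτ⟩ := hdom
  obtain ⟨K, r, hKc, hr, hKsub, hmem⟩ := setup hJ hI hz hzJ hψ hψI
  set F := fderiv ℝ (fun p : ℝ × ℝ => k p.1 p.2) with hF
  have hFc : ContinuousOn F (J ×ˢ I) := hk.continuousOn_fderiv_of_isOpen (hJ.prod hI) le_rfl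
  have hkc : ContinuousOn (fun p : ℝ × ℝ => k p.1 p.2) (J ×ˢ I) := hk.continuousOn
  have hp1F : ∀ x y : ℝ, x ∈ J → y ∈ I → p1 k x y = F (x, y) (1, 0) := fun x y hx hy => by
    rw [hF]; exact p1_eq hJ hI hk hx hy
  have hp2F : ∀ x y : ℝ, x ∈ J → y ∈ I → p2 k x y = F (x, y) (0, 1) := fun x y hx hy => by
    rw [hF]; exact p2_eq hJ hI hk hx hy
  have hUF := Metric.uniformContinuousOn_iff_le.1
    (hKc.uniformContinuousOn_of_continuous (hFc.mono hKsub))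
  have hUk := Metric.uniformContinuousOn_iff_le.1
    (hKc.uniformContinuousOn_of_continuous (hkc.mono hKsub))
  have hhne : h ≠ 0 := ne_of_gt hh
  obtain ⟨ε2, hε20, hε2half⟩ : ∃ e : ℝ, 0 < e ∧ e * h ≤ ε / 2 :=
    ⟨ε / (2 * h), by positivity, le_of_eq (by field_simp [hhne])⟩
  obtain ⟨δF, hδF0, HF⟩ := hUF ε2 hε20
  obtain ⟨δk, hδk0, Hk⟩ := hUk ε hε
  obtain ⟨M, hM0, hzlip⟩ : ∃ M : ℝ, 0 ≤ M ∧
      ∀ s ∈ Icc (0:ℝ) h, ∀ t ∈ Icc (0:ℝ) h, |z s - z t| ≤ M * |s - t| :=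
    ⟨supN 0 h (derivWithin z (Icc 0 h)), supN_nonneg _ _ _,
      fun s hs t ht => hz.lip hs ht⟩
  obtain ⟨N, hN0, hψlip⟩ : ∃ N : ℝ, 0 ≤ N ∧
      ∀ s ∈ Icc (-h) (0:ℝ), ∀ t ∈ Icc (-h) (0:ℝ), |ψ s - ψ t| ≤ N * |s - t| :=
    ⟨supN (-h) 0 (derivWithin ψ (Icc (-h) 0)), supN_nonneg _ _ _,
      fun s hs t ht => hψ.lip hs ht⟩
  obtain ⟨δ, hδ0, hδr, hδδF, hδMk, hδNk⟩ : ∃ δ : ℝ, 0 < δ ∧ δ ≤ r ∧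
      δ ≤ δF ∧ δ * (1 + M) ≤ δk ∧ δ * (1 + N) ≤ δk := by
    have hMN : (0:ℝ) < 1 + M + N := by linarith
    refine ⟨min r (min δF (δk / (1 + M + N))), ?_, min_le_left _ _, ?_, ?_, ?_⟩
    · exact lt_min hr (lt_min hδF0 (by positivity))
    · exact (min_le_right _ _).trans (min_le_left _ _)
    · have h1 : min r (min δF (δk / (1 + M + N))) ≤ δk / (1 + M + N) :=
        (min_le_right _ _).trans (min_le_right _ _)
      calc min r (min δF (δk / (1 + M + N))) * (1 + M)
          ≤ (δk / (1 + M + N)) * (1 + M + N) :=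
            mul_le_mul h1 (by linarith) (by linarith) (by positivity)
        _ = δk := by field_simp
    · have h1 : min r (min δF (δk / (1 + M + N))) ≤ δk / (1 + M + N) :=
        (min_le_right _ _).trans (min_le_right _ _)
      calc min r (min δF (δk / (1 + M + N))) * (1 + N)
          ≤ (δk / (1 + M + N)) * (1 + M + N) :=
            mul_le_mul h1 (by linarith) (by linarith) (by positivity)
        _ = δk := by field_simp
  refine ⟨δ, hδ0, ?_⟩
  intro z' ψ' τ' hdom' hcz hcψ hcτ
  obtain ⟨hz', hz'J, hψ', hψ'I, hτ'⟩ := hdom'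
  have hτI : τ ∈ Icc (0:ℝ) h := ⟨hτ.1.le, hτ.2.le⟩
  have hτ'I : τ' ∈ Icc (0:ℝ) h := ⟨hτ'.1.le, hτ'.2.le⟩
  have hsubz : ContinuousOn (z' - z) (Icc 0 h) := hz'.1.sub hz.1
  have hsubψ : ContinuousOn (ψ' - ψ) (Icc (-h) 0) := hψ'.1.sub hψ.1
  have hzz : ∀ σ ∈ Icc (0:ℝ) h, |z' σ - z σ| ≤ δ := by
    intro σ hσ
    have h1 : ‖(z' - z) σ‖ ≤ supN 0 h (z' - z) := norm_le_supN hsubz hσ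
    have h2 := (supN_le_nC1 0 h (z' - z)).trans hcz
    simpa [Pi.sub_apply] using h1.trans h2
  have hψψ : ∀ σ ∈ Icc (-h) (0:ℝ), |ψ' σ - ψ σ| ≤ δ := by
    intro σ hσ
    have h1 : ‖(ψ' - ψ) σ‖ ≤ supN (-h) 0 (ψ' - ψ) := norm_le_supN hsubψ hσ
    have h2 := (supN_le_nC1 (-h) 0 (ψ' - ψ)).trans hcψ
    simpa [Pi.sub_apply] using h1.trans h2
  have hbmem : ∀ σ ∈ Icc (0:ℝ) h, ((z' σ, ψ' (-σ)) : ℝ × ℝ) ∈ K := fun σ hσ =>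
    hmem _ _ ⟨σ, hσ, (hzz σ hσ).trans hδr⟩
      ⟨-σ, neg_mapsTo hσ, (hψψ (-σ) (neg_mapsTo hσ)).trans hδr⟩
  have hamem : ∀ σ ∈ Icc (0:ℝ) h, ((z σ, ψ (-σ)) : ℝ × ℝ) ∈ K := fun σ hσ =>
    hmem _ _ ⟨σ, hσ, by simp [hr.le]⟩ ⟨-σ, neg_mapsTo hσ, by simp [hr.le]⟩
  have hbJI : ∀ σ ∈ Icc (0:ℝ) h, ((z' σ, ψ' (-σ)) : ℝ × ℝ) ∈ J ×ˢ I :=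
    fun σ hσ => hKsub (hbmem σ hσ)
  have haJI : ∀ σ ∈ Icc (0:ℝ) h, ((z σ, ψ (-σ)) : ℝ × ℝ) ∈ J ×ˢ I :=
    fun σ hσ => hKsub (hamem σ hσ)
  -- the A-term pointwise estimate
  have hkA : ∀ x ∈ Set.uIoc τ τ', |k (z' x) (ψ' (-x)) - k (z τ) (ψ (-τ))| ≤ ε := by
    intro x hx
    have hxI : x ∈ Icc (0:ℝ) h := uIoc_mem_Icc hτI hτ'I hx
    have hxτ : |x - τ| ≤ δ := (uIoc_dist hx).trans hcτ
    have hd1 : |z' x - z τ| ≤ δ * (1 + M) := by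
      calc |z' x - z τ| ≤ |z' x - z x| + |z x - z τ| := abs_sub_le _ _ _
        _ ≤ δ + M * |x - τ| := add_le_add (hzz x hxI) (hzlip x hxI τ hτI)
        _ ≤ δ + M * δ := by nlinarith
        _ = δ * (1 + M) := by ring
    have habs : |(-x) - (-τ)| = |x - τ| := by
      rw [show (-x) - (-τ) = -(x - τ) by ring, abs_neg]
    have hd2 : |ψ' (-x) - ψ (-τ)| ≤ δ * (1 + N) := by
      calc |ψ' (-x) - ψ (-τ)| ≤ |ψ' (-x) - ψ (-x)| + |ψ (-x) - ψ (-τ)| := abs_sub_le _ _ _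
        _ ≤ δ + N * |(-x) - (-τ)| := add_le_add (hψψ _ (neg_mapsTo hxI))
            (hψlip _ (neg_mapsTo hxI) _ (neg_mapsTo hτI))
        _ ≤ δ + N * δ := by rw [habs]; nlinarith
        _ = δ * (1 + N) := by ring
    have hdd : dist ((z' x, ψ' (-x)) : ℝ × ℝ) ((z τ, ψ (-τ)) : ℝ × ℝ) ≤ δk := by
      rw [Prod.dist_eq]
      exact max_le (by rw [Real.dist_eq]; exact hd1.trans hδMk)
        (by rw [Real.dist_eq]; exact hd2.trans hδNk)
    have := Hk _ (hbmem x hxI) _ (hamem τ hτI) hdd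
    rwa [Real.dist_eq] at this
  -- the B-term pointwise (mean value) estimate
  have hR : ∀ x ∈ Icc (0:ℝ) h,
      |k (z' x) (ψ' (-x)) - k (z x) (ψ (-x)) - p1 k (z x) (ψ (-x)) * (z' - z) x
        - p2 k (z x) (ψ (-x)) * (ψ' - ψ) (-x)|
      ≤ ε2 * (supN 0 h (z' - z) + supN (-h) 0 (ψ' - ψ)) := by
    intro x hxI
    have hseg : segment ℝ ((z x, ψ (-x)) : ℝ × ℝ) ((z' x, ψ' (-x)) : ℝ × ℝ) ⊆ K := by
      intro c hc
      have hc1 : |c.1 - z x| ≤ δ := ((seg_est hc).1).trans (hzz x hxI)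
      have hc2 : |c.2 - ψ (-x)| ≤ δ := ((seg_est hc).2).trans (hψψ _ (neg_mapsTo hxI))
      have := hmem c.1 c.2 ⟨x, hxI, hc1.trans hδr⟩ ⟨-x, neg_mapsTo hxI, hc2.trans hδr⟩
      simpa using this
    have hsegd : ∀ c ∈ segment ℝ ((z x, ψ (-x)) : ℝ × ℝ) ((z' x, ψ' (-x)) : ℝ × ℝ),
        dist c ((z x, ψ (-x)) : ℝ × ℝ) ≤ δ := by
      intro c hc
      rw [Prod.dist_eq]
      exact max_le (by rw [Real.dist_eq]; exact ((seg_est hc).1).trans (hzz x hxI))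
        (by rw [Real.dist_eq]; exact ((seg_est hc).2).trans (hψψ _ (neg_mapsTo hxI)))
    have hmvt := Convex.norm_image_sub_le_of_norm_hasFDerivWithin_le'
      (f := fun p : ℝ × ℝ => k p.1 p.2) (f' := F) (φ := F ((z x, ψ (-x)) : ℝ × ℝ))
      (s := segment ℝ ((z x, ψ (-x)) : ℝ × ℝ) ((z' x, ψ' (-x)) : ℝ × ℝ)) (C := ε2)
      (fun c hc => ((hk.differentiableOn one_ne_zero).differentiableAt
        ((hJ.prod hI).mem_nhds (hKsub (hseg hc)))).hasFDerivAt.hasFDerivWithinAt)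
      (fun c hc => by
        have := HF _ (hseg hc) _ (hamem x hxI) ((hsegd c hc).trans hδδF)
        rwa [dist_eq_norm] at this)
      (convex_segment _ _) (left_mem_segment ℝ _ _) (right_mem_segment ℝ _ _)
    have hba : ((z' x, ψ' (-x)) : ℝ × ℝ) - ((z x, ψ (-x)) : ℝ × ℝ)
        = ((z' x - z x, ψ' (-x) - ψ (-x)) : ℝ × ℝ) := rfl
    have hφ : F ((z x, ψ (-x)) : ℝ × ℝ) (((z' x, ψ' (-x)) : ℝ × ℝ) - ((z x, ψ (-x)) : ℝ × ℝ))
        = p1 k (z x) (ψ (-x)) * (z' - z) x + p2 k (z x) (ψ (-x)) * (ψ' - ψ) (-x) := by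
      rw [hba, clm_decomp, ← hp1F _ _ (haJI x hxI).1 (haJI x hxI).2,
        ← hp2F _ _ (haJI x hxI).1 (haJI x hxI).2]
      simp only [Pi.sub_apply]
      ring
    have hrw : k (z' x) (ψ' (-x)) - k (z x) (ψ (-x)) - p1 k (z x) (ψ (-x)) * (z' - z) x
        - p2 k (z x) (ψ (-x)) * (ψ' - ψ) (-x)
        = (fun p : ℝ × ℝ => k p.1 p.2) ((z' x, ψ' (-x)) : ℝ × ℝ)
          - (fun p : ℝ × ℝ => k p.1 p.2) ((z x, ψ (-x)) : ℝ × ℝ)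
          - F ((z x, ψ (-x)) : ℝ × ℝ)
              (((z' x, ψ' (-x)) : ℝ × ℝ) - ((z x, ψ (-x)) : ℝ × ℝ)) := by
      rw [hφ]; ring
    rw [hrw]
    refine hmvt.trans ?_
    have hnorm : ‖((z' x, ψ' (-x)) : ℝ × ℝ) - ((z x, ψ (-x)) : ℝ × ℝ)‖
        ≤ supN 0 h (z' - z) + supN (-h) 0 (ψ' - ψ) := by
      rw [hba, Prod.norm_def]
      have l1 : ‖z' x - z x‖ ≤ supN 0 h (z' - z) := by
        simpa [Pi.sub_apply] using norm_le_supN hsubz hxI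
      have l2 : ‖ψ' (-x) - ψ (-x)‖ ≤ supN (-h) 0 (ψ' - ψ) := by
        simpa [Pi.sub_apply] using norm_le_supN hsubψ (neg_mapsTo hxI)
      exact max_le (l1.trans (le_add_of_nonneg_right (supN_nonneg _ _ _)))
        (l2.trans (le_add_of_nonneg_left (supN_nonneg _ _ _)))
    exact mul_le_mul_of_nonneg_left hnorm hε20.le
  -- continuity and integrability
  have hq1 : ContinuousOn (fun σ => p1 k (z σ) (ψ (-σ))) (Icc (0:ℝ) h) := by
    have hFcomp : ContinuousOn (fun σ => F (z σ, ψ (-σ))) (Icc (0:ℝ) h) :=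
      hFc.comp (pair_contOn hz.1 hψ.1) (pair_mapsTo hzJ hψI)
    exact (hFcomp.clm_apply continuousOn_const).congr
      fun σ hσ => hp1F _ _ (haJI σ hσ).1 (haJI σ hσ).2
  have hq2 : ContinuousOn (fun σ => p2 k (z σ) (ψ (-σ))) (Icc (0:ℝ) h) := by
    have hFcomp : ContinuousOn (fun σ => F (z σ, ψ (-σ))) (Icc (0:ℝ) h) :=
      hFc.comp (pair_contOn hz.1 hψ.1) (pair_mapsTo hzJ hψI)
    exact (hFcomp.clm_apply continuousOn_const).congr
      fun σ hσ => hp2F _ _ (haJI σ hσ).1 (haJI σ hσ).2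
  have hkb' : ContinuousOn (fun σ => k (z' σ) (ψ' (-σ))) (Icc (0:ℝ) h) :=
    hkc.comp (pair_contOn hz'.1 hψ'.1) (pair_mapsTo hz'J hψ'I)
  have hkb : ContinuousOn (fun σ => k (z σ) (ψ (-σ))) (Icc (0:ℝ) h) :=
    hkc.comp (pair_contOn hz.1 hψ.1) (pair_mapsTo hzJ hψI)
  have hχcomp : ContinuousOn (fun σ => (ψ' - ψ) (-σ)) (Icc (0:ℝ) h) :=
    hsubψ.comp continuous_neg.continuousOn neg_mapsTo
  have hsub0τ : uIcc (0:ℝ) τ ⊆ Icc (0:ℝ) h := by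
    rw [uIcc_of_le hτ.1.le]; exact Icc_subset_Icc le_rfl hτ.2.le
  have hsubττ' : uIcc τ τ' ⊆ Icc (0:ℝ) h := uIcc_subset_Icc hτI hτ'I
  have hi1 : IntervalIntegrable (fun σ => k (z' σ) (ψ' (-σ))) MeasureTheory.volume 0 τ :=
    ((hkb'.mono hsub0τ)).intervalIntegrable
  have hi2 : IntervalIntegrable (fun σ => k (z' σ) (ψ' (-σ))) MeasureTheory.volume τ τ' :=
    ((hkb'.mono hsubττ')).intervalIntegrable
  have hif : IntervalIntegrable (fun σ => k (z σ) (ψ (-σ))) MeasureTheory.volume 0 τ :=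
    ((hkb.mono hsub0τ)).intervalIntegrable
  have hig1 : IntervalIntegrable (fun σ => p1 k (z σ) (ψ (-σ)) * (z' - z) σ)
      MeasureTheory.volume 0 τ := (((hq1.mul hsubz).mono hsub0τ)).intervalIntegrable
  have hig2 : IntervalIntegrable (fun σ => p2 k (z σ) (ψ (-σ)) * (ψ' - ψ) (-σ))
      MeasureTheory.volume 0 τ := (((hq2.mul hχcomp).mono hsub0τ)).intervalIntegrable
  have hsplit := intervalIntegral.integral_add_adjacent_intervals hi1 hi2
  have heq : Ik k z' ψ' τ' - Ik k z ψ τ - DIk k z ψ τ (z' - z) (ψ' - ψ) (τ' - τ)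
      = (∫ σ in (0:ℝ)..τ, (k (z' σ) (ψ' (-σ)) - k (z σ) (ψ (-σ))
            - p1 k (z σ) (ψ (-σ)) * (z' - z) σ - p2 k (z σ) (ψ (-σ)) * (ψ' - ψ) (-σ)))
        + ∫ σ in τ..τ', (k (z' σ) (ψ' (-σ)) - k (z τ) (ψ (-τ))) := by
    have e1 := intervalIntegral.integral_sub
      (f := fun σ => k (z' σ) (ψ' (-σ)) - k (z σ) (ψ (-σ)) - p1 k (z σ) (ψ (-σ)) * (z' - z) σ)
      (g := fun σ => p2 k (z σ) (ψ (-σ)) * (ψ' - ψ) (-σ))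
      ((hi1.sub hif).sub hig1) hig2
    have e2 := intervalIntegral.integral_sub
      (f := fun σ => k (z' σ) (ψ' (-σ)) - k (z σ) (ψ (-σ)))
      (g := fun σ => p1 k (z σ) (ψ (-σ)) * (z' - z) σ) (hi1.sub hif) hig1
    have e3 := intervalIntegral.integral_sub
      (f := fun σ => k (z' σ) (ψ' (-σ))) (g := fun σ => k (z σ) (ψ (-σ))) hi1 hif
    have e4 := intervalIntegral.integral_sub
      (f := fun σ => k (z' σ) (ψ' (-σ))) (g := fun _ => k (z τ) (ψ (-τ)))
      hi2 (intervalIntegrable_const (c := k (z τ) (ψ (-τ))))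
    have e5 : (∫ _ in τ..τ', k (z τ) (ψ (-τ))) = (τ' - τ) * k (z τ) (ψ (-τ)) := by
      rw [intervalIntegral.integral_const]; simp [smul_eq_mul]
    simp only [Ik, DIk]
    rw [← hsplit, e1, e2, e3, e4, e5]
    ring
  rw [heq]
  have hB : ‖∫ σ in (0:ℝ)..τ, (k (z' σ) (ψ' (-σ)) - k (z σ) (ψ (-σ))
      - p1 k (z σ) (ψ (-σ)) * (z' - z) σ - p2 k (z σ) (ψ (-σ)) * (ψ' - ψ) (-σ))‖
      ≤ (ε2 * (supN 0 h (z' - z) + supN (-h) 0 (ψ' - ψ))) * |τ - 0| := by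
    apply intervalIntegral.norm_integral_le_of_norm_le_const
    intro x hx
    have hxI : x ∈ Icc (0:ℝ) h := hsub0τ (Set.uIoc_subset_uIcc hx)
    rw [Real.norm_eq_abs]
    exact hR x hxI
  have hA : ‖∫ σ in τ..τ', (k (z' σ) (ψ' (-σ)) - k (z τ) (ψ (-τ)))‖ ≤ ε * |τ' - τ| := by
    apply intervalIntegral.norm_integral_le_of_norm_le_const
    intro x hx
    rw [Real.norm_eq_abs]
    exact hkA x hx
  have hS0 : 0 ≤ supN 0 h (z' - z) + supN (-h) 0 (ψ' - ψ) :=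
    add_nonneg (supN_nonneg _ _ _) (supN_nonneg _ _ _)
  have hB' : (ε2 * (supN 0 h (z' - z) + supN (-h) 0 (ψ' - ψ))) * |τ - 0|
      ≤ ε / 2 * (supN 0 h (z' - z) + supN (-h) 0 (ψ' - ψ)) := by
    calc (ε2 * (supN 0 h (z' - z) + supN (-h) 0 (ψ' - ψ))) * |τ - 0|
        = ε2 * (supN 0 h (z' - z) + supN (-h) 0 (ψ' - ψ)) * τ := by
          rw [sub_zero, abs_of_nonneg hτ.1.le]
      _ ≤ ε2 * (supN 0 h (z' - z) + supN (-h) 0 (ψ' - ψ)) * h :=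
          mul_le_mul_of_nonneg_left hτ.2.le (mul_nonneg hε20.le hS0)
      _ = ε2 * h * (supN 0 h (z' - z) + supN (-h) 0 (ψ' - ψ)) := by ring
      _ ≤ ε / 2 * (supN 0 h (z' - z) + supN (-h) 0 (ψ' - ψ)) :=
          mul_le_mul_of_nonneg_right hε2half hS0
  have m1 : supN 0 h (z' - z) + supN (-h) 0 (ψ' - ψ)
      ≤ nC1 0 h (z' - z) + nC1 (-h) 0 (ψ' - ψ) :=
    add_le_add (supN_le_nC1 _ _ _) (supN_le_nC1 _ _ _)
  have hfin : ε / 2 * (supN 0 h (z' - z) + supN (-h) 0 (ψ' - ψ)) + ε * |τ' - τ|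
      ≤ ε * (nC1 0 h (z' - z) + nC1 (-h) 0 (ψ' - ψ) + |τ' - τ|) := by
    have m2 : ε / 2 * (supN 0 h (z' - z) + supN (-h) 0 (ψ' - ψ))
        ≤ ε / 2 * (nC1 0 h (z' - z) + nC1 (-h) 0 (ψ' - ψ)) :=
      mul_le_mul_of_nonneg_left m1 (by positivity)
    have m3 : ε / 2 * (nC1 0 h (z' - z) + nC1 (-h) 0 (ψ' - ψ))
        ≤ ε * (nC1 0 h (z' - z) + nC1 (-h) 0 (ψ' - ψ)) :=
      mul_le_mul_of_nonneg_right (half_le_self hε.le) (hS0.trans m1)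
    nlinarith
  calc |(∫ σ in (0:ℝ)..τ, (k (z' σ) (ψ' (-σ)) - k (z σ) (ψ (-σ))
            - p1 k (z σ) (ψ (-σ)) * (z' - z) σ - p2 k (z σ) (ψ (-σ)) * (ψ' - ψ) (-σ)))
        + ∫ σ in τ..τ', (k (z' σ) (ψ' (-σ)) - k (z τ) (ψ (-τ)))|
      ≤ |∫ σ in (0:ℝ)..τ, (k (z' σ) (ψ' (-σ)) - k (z σ) (ψ (-σ))
            - p1 k (z σ) (ψ (-σ)) * (z' - z) σ - p2 k (z σ) (ψ (-σ)) * (ψ' - ψ) (-σ))|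
        + |∫ σ in τ..τ', (k (z' σ) (ψ' (-σ)) - k (z τ) (ψ (-τ)))| := abs_add_le _ _
    _ ≤ ε / 2 * (supN 0 h (z' - z) + supN (-h) 0 (ψ' - ψ)) + ε * |τ' - τ| :=
        add_le_add (hB.trans hB') hA
    _ ≤ ε * (nC1 0 h (z' - z) + nC1 (-h) 0 (ψ' - ψ) + |τ' - τ|) := hfin

set_option maxHeartbeats 1000000 in
lemma part2 {J I : Set ℝ} (hJ : IsOpen J) (hI : IsOpen I) {h : ℝ} (hh : 0 < h)
    {k : ℝ → ℝ → ℝ} (hk : ContDiffOn ℝ 1 (fun p : ℝ × ℝ => k p.1 p.2) (J ×ˢ I))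
    {z ψ : ℝ → ℝ} {τ : ℝ} (hdom : DomIk J I h z ψ τ) {ε : ℝ} (hε : 0 < ε) :
    ∃ δ > 0, ∀ z' ψ' : ℝ → ℝ, ∀ τ' : ℝ, DomIk J I h z' ψ' τ' →
      nC1 0 h (z' - z) ≤ δ → nC1 (-h) 0 (ψ' - ψ) ≤ δ → |τ' - τ| ≤ δ →
      ∀ u χ : ℝ → ℝ, ∀ s : ℝ, C1on 0 h u → C1on (-h) 0 χ →
        |DIk k z' ψ' τ' u χ s - DIk k z ψ τ u χ s| ≤
          ε * (nC1 0 h u + nC1 (-h) 0 χ + |s|) := by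
  obtain ⟨hz, hzJ, hψ, hψI, hτ⟩ := hdom
  obtain ⟨K, r, hKc, hr, hKsub, hmem⟩ := setup hJ hI hz hzJ hψ hψI
  set F := fderiv ℝ (fun p : ℝ × ℝ => k p.1 p.2) with hF
  have hFc : ContinuousOn F (J ×ˢ I) := hk.continuousOn_fderiv_of_isOpen (hJ.prod hI) le_rfl
  have hkc : ContinuousOn (fun p : ℝ × ℝ => k p.1 p.2) (J ×ˢ I) := hk.continuousOn
  have hp1F : ∀ x y : ℝ, x ∈ J → y ∈ I → p1 k x y = F (x, y) (1, 0) := fun x y hx hy => by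
    rw [hF]; exact p1_eq hJ hI hk hx hy
  have hp2F : ∀ x y : ℝ, x ∈ J → y ∈ I → p2 k x y = F (x, y) (0, 1) := fun x y hx hy => by
    rw [hF]; exact p2_eq hJ hI hk hx hy
  obtain ⟨C, hC0, hCF⟩ : ∃ C : ℝ, 0 < C ∧ ∀ p ∈ K, ‖F p‖ ≤ C := by
    obtain ⟨C₀, hC₀⟩ := hKc.exists_bound_of_continuousOn (hFc.mono hKsub)
    exact ⟨max C₀ 1, lt_of_lt_of_le one_pos (le_max_right _ _),
      fun p hp => (hC₀ p hp).trans (le_max_left _ _)⟩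
  have hUF := Metric.uniformContinuousOn_iff_le.1
    (hKc.uniformContinuousOn_of_continuous (hFc.mono hKsub))
  have hUk := Metric.uniformContinuousOn_iff_le.1
    (hKc.uniformContinuousOn_of_continuous (hkc.mono hKsub))
  have hhne : h ≠ 0 := ne_of_gt hh
  obtain ⟨ε2, hε20, hε2half⟩ : ∃ e : ℝ, 0 < e ∧ e * h ≤ ε / 2 :=
    ⟨ε / (2 * h), by positivity, le_of_eq (by field_simp [hhne])⟩
  obtain ⟨δF, hδF0, HF⟩ := hUF ε2 hε20
  obtain ⟨δk, hδk0, Hk⟩ := hUk ε hε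
  obtain ⟨M, hM0, hzlip⟩ : ∃ M : ℝ, 0 ≤ M ∧
      ∀ s ∈ Icc (0:ℝ) h, ∀ t ∈ Icc (0:ℝ) h, |z s - z t| ≤ M * |s - t| :=
    ⟨supN 0 h (derivWithin z (Icc 0 h)), supN_nonneg _ _ _,
      fun s hs t ht => hz.lip hs ht⟩
  obtain ⟨N, hN0, hψlip⟩ : ∃ N : ℝ, 0 ≤ N ∧
      ∀ s ∈ Icc (-h) (0:ℝ), ∀ t ∈ Icc (-h) (0:ℝ), |ψ s - ψ t| ≤ N * |s - t| :=
    ⟨supN (-h) 0 (derivWithin ψ (Icc (-h) 0)), supN_nonneg _ _ _,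
      fun s hs t ht => hψ.lip hs ht⟩
  obtain ⟨δ, hδ0, hδr, hCδ, hδδF, hδMk, hδNk⟩ : ∃ δ : ℝ, 0 < δ ∧ δ ≤ r ∧ C * δ ≤ ε / 2 ∧
      δ ≤ δF ∧ δ * (1 + M) ≤ δk ∧ δ * (1 + N) ≤ δk := by
    have hMN : (0:ℝ) < 1 + M + N := by linarith
    refine ⟨min (min r (ε / (2 * C))) (min δF (δk / (1 + M + N))), ?_, ?_, ?_, ?_, ?_, ?_⟩
    · exact lt_min (lt_min hr (by positivity)) (lt_min hδF0 (by positivity))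
    · exact (min_le_left _ _).trans (min_le_left _ _)
    · have h1 : min (min r (ε / (2 * C))) (min δF (δk / (1 + M + N))) ≤ ε / (2 * C) :=
        (min_le_left _ _).trans (min_le_right _ _)
      calc C * min (min r (ε / (2 * C))) (min δF (δk / (1 + M + N)))
          ≤ C * (ε / (2 * C)) := mul_le_mul_of_nonneg_left h1 hC0.le
        _ = ε / 2 := by field_simp [ne_of_gt hC0]
    · exact (min_le_right _ _).trans (min_le_left _ _)
    · have h1 : min (min r (ε / (2 * C))) (min δF (δk / (1 + M + N))) ≤ δk / (1 + M + N) :=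
        (min_le_right _ _).trans (min_le_right _ _)
      calc min (min r (ε / (2 * C))) (min δF (δk / (1 + M + N))) * (1 + M)
          ≤ (δk / (1 + M + N)) * (1 + M + N) := by
            refine mul_le_mul h1 (by linarith) (by linarith) (by positivity)
        _ = δk := by field_simp
    · have h1 : min (min r (ε / (2 * C))) (min δF (δk / (1 + M + N))) ≤ δk / (1 + M + N) :=
        (min_le_right _ _).trans (min_le_right _ _)
      calc min (min r (ε / (2 * C))) (min δF (δk / (1 + M + N))) * (1 + N)
          ≤ (δk / (1 + M + N)) * (1 + M + N) := by
            refine mul_le_mul h1 (by linarith) (by linarith) (by positivity)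
        _ = δk := by field_simp
  refine ⟨δ, hδ0, ?_⟩
  intro z' ψ' τ' hdom' hcz hcψ hcτ u χ s hu hχ
  obtain ⟨hz', hz'J, hψ', hψ'I, hτ'⟩ := hdom'
  have hτI : τ ∈ Icc (0:ℝ) h := ⟨hτ.1.le, hτ.2.le⟩
  have hτ'I : τ' ∈ Icc (0:ℝ) h := ⟨hτ'.1.le, hτ'.2.le⟩
  have hsubz : ContinuousOn (z' - z) (Icc 0 h) := hz'.1.sub hz.1
  have hsubψ : ContinuousOn (ψ' - ψ) (Icc (-h) 0) := hψ'.1.sub hψ.1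
  have hzz : ∀ σ ∈ Icc (0:ℝ) h, |z' σ - z σ| ≤ δ := by
    intro σ hσ
    have h1 : ‖(z' - z) σ‖ ≤ supN 0 h (z' - z) := norm_le_supN hsubz hσ
    have h2 := (supN_le_nC1 0 h (z' - z)).trans hcz
    simpa [Pi.sub_apply] using h1.trans h2
  have hψψ : ∀ σ ∈ Icc (-h) (0:ℝ), |ψ' σ - ψ σ| ≤ δ := by
    intro σ hσ
    have h1 : ‖(ψ' - ψ) σ‖ ≤ supN (-h) 0 (ψ' - ψ) := norm_le_supN hsubψ hσ
    have h2 := (supN_le_nC1 (-h) 0 (ψ' - ψ)).trans hcψ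
    simpa [Pi.sub_apply] using h1.trans h2
  have hbmem : ∀ σ ∈ Icc (0:ℝ) h, ((z' σ, ψ' (-σ)) : ℝ × ℝ) ∈ K := fun σ hσ =>
    hmem _ _ ⟨σ, hσ, (hzz σ hσ).trans hδr⟩
      ⟨-σ, neg_mapsTo hσ, (hψψ (-σ) (neg_mapsTo hσ)).trans hδr⟩
  have hamem : ∀ σ ∈ Icc (0:ℝ) h, ((z σ, ψ (-σ)) : ℝ × ℝ) ∈ K := fun σ hσ =>
    hmem _ _ ⟨σ, hσ, by simp [hr.le]⟩ ⟨-σ, neg_mapsTo hσ, by simp [hr.le]⟩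
  have hbJI : ∀ σ ∈ Icc (0:ℝ) h, ((z' σ, ψ' (-σ)) : ℝ × ℝ) ∈ J ×ˢ I :=
    fun σ hσ => hKsub (hbmem σ hσ)
  have haJI : ∀ σ ∈ Icc (0:ℝ) h, ((z σ, ψ (-σ)) : ℝ × ℝ) ∈ J ×ˢ I :=
    fun σ hσ => hKsub (hamem σ hσ)
  have hdists : ∀ σ ∈ Icc (0:ℝ) h,
      dist ((z' σ, ψ' (-σ)) : ℝ × ℝ) ((z σ, ψ (-σ)) : ℝ × ℝ) ≤ δ := by
    intro σ hσ
    rw [Prod.dist_eq]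
    exact max_le (by rw [Real.dist_eq]; exact hzz σ hσ)
      (by rw [Real.dist_eq]; exact hψψ _ (neg_mapsTo hσ))
  have hp1b : ∀ σ ∈ Icc (0:ℝ) h, |p1 k (z' σ) (ψ' (-σ))| ≤ C := by
    intro σ hσ
    rw [hp1F _ _ (hbJI σ hσ).1 (hbJI σ hσ).2]
    calc |F (z' σ, ψ' (-σ)) (1, 0)| ≤ ‖F (z' σ, ψ' (-σ))‖ * max |(1:ℝ)| |(0:ℝ)| :=
          apply_le_opNorm₂ _ _ _
      _ = ‖F (z' σ, ψ' (-σ))‖ := by simp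
      _ ≤ C := hCF _ (hbmem σ hσ)
  have hp2b : ∀ σ ∈ Icc (0:ℝ) h, |p2 k (z' σ) (ψ' (-σ))| ≤ C := by
    intro σ hσ
    rw [hp2F _ _ (hbJI σ hσ).1 (hbJI σ hσ).2]
    calc |F (z' σ, ψ' (-σ)) (0, 1)| ≤ ‖F (z' σ, ψ' (-σ))‖ * max |(0:ℝ)| |(1:ℝ)| :=
          apply_le_opNorm₂ _ _ _
      _ = ‖F (z' σ, ψ' (-σ))‖ := by simp
      _ ≤ C := hCF _ (hbmem σ hσ)
  have hFd : ∀ σ ∈ Icc (0:ℝ) h,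
      ‖F (z' σ, ψ' (-σ)) - F (z σ, ψ (-σ))‖ ≤ ε2 := by
    intro σ hσ
    have := HF _ (hbmem σ hσ) _ (hamem σ hσ) ((hdists σ hσ).trans hδδF)
    rwa [dist_eq_norm] at this
  have hp1d : ∀ σ ∈ Icc (0:ℝ) h,
      |p1 k (z' σ) (ψ' (-σ)) - p1 k (z σ) (ψ (-σ))| ≤ ε2 := by
    intro σ hσ
    rw [hp1F _ _ (hbJI σ hσ).1 (hbJI σ hσ).2, hp1F _ _ (haJI σ hσ).1 (haJI σ hσ).2]
    have h1 : F (z' σ, ψ' (-σ)) (1, 0) - F (z σ, ψ (-σ)) (1, 0)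
        = (F (z' σ, ψ' (-σ)) - F (z σ, ψ (-σ))) (1, 0) := by simp
    rw [h1]
    calc |(F (z' σ, ψ' (-σ)) - F (z σ, ψ (-σ))) (1, 0)|
        ≤ ‖F (z' σ, ψ' (-σ)) - F (z σ, ψ (-σ))‖ * max |(1:ℝ)| |(0:ℝ)| :=
          apply_le_opNorm₂ _ _ _
      _ = ‖F (z' σ, ψ' (-σ)) - F (z σ, ψ (-σ))‖ := by simp
      _ ≤ ε2 := hFd σ hσ
  have hp2d : ∀ σ ∈ Icc (0:ℝ) h,
      |p2 k (z' σ) (ψ' (-σ)) - p2 k (z σ) (ψ (-σ))| ≤ ε2 := by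
    intro σ hσ
    rw [hp2F _ _ (hbJI σ hσ).1 (hbJI σ hσ).2, hp2F _ _ (haJI σ hσ).1 (haJI σ hσ).2]
    have h1 : F (z' σ, ψ' (-σ)) (0, 1) - F (z σ, ψ (-σ)) (0, 1)
        = (F (z' σ, ψ' (-σ)) - F (z σ, ψ (-σ))) (0, 1) := by simp
    rw [h1]
    calc |(F (z' σ, ψ' (-σ)) - F (z σ, ψ (-σ))) (0, 1)|
        ≤ ‖F (z' σ, ψ' (-σ)) - F (z σ, ψ (-σ))‖ * max |(0:ℝ)| |(1:ℝ)| :=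
          apply_le_opNorm₂ _ _ _
      _ = ‖F (z' σ, ψ' (-σ)) - F (z σ, ψ (-σ))‖ := by simp
      _ ≤ ε2 := hFd σ hσ
  have habs : |(-τ') - (-τ)| = |τ' - τ| := by
    rw [show (-τ') - (-τ) = -(τ' - τ) by ring, abs_neg]
  have hkd : |k (z' τ') (ψ' (-τ')) - k (z τ) (ψ (-τ))| ≤ ε := by
    have hd1 : |z' τ' - z τ| ≤ δ * (1 + M) := by
      calc |z' τ' - z τ| ≤ |z' τ' - z τ'| + |z τ' - z τ| := abs_sub_le _ _ _
        _ ≤ δ + M * |τ' - τ| := add_le_add (hzz τ' hτ'I) (hzlip τ' hτ'I τ hτI)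
        _ ≤ δ + M * δ := by nlinarith
        _ = δ * (1 + M) := by ring
    have hd2 : |ψ' (-τ') - ψ (-τ)| ≤ δ * (1 + N) := by
      calc |ψ' (-τ') - ψ (-τ)| ≤ |ψ' (-τ') - ψ (-τ')| + |ψ (-τ') - ψ (-τ)| := abs_sub_le _ _ _
        _ ≤ δ + N * |(-τ') - (-τ)| :=
            add_le_add (hψψ _ (neg_mapsTo hτ'I)) (hψlip _ (neg_mapsTo hτ'I) _ (neg_mapsTo hτI))
        _ ≤ δ + N * δ := by rw [habs]; nlinarith
        _ = δ * (1 + N) := by ring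
    have hdd : dist ((z' τ', ψ' (-τ')) : ℝ × ℝ) ((z τ, ψ (-τ)) : ℝ × ℝ) ≤ δk := by
      rw [Prod.dist_eq]
      exact max_le (by rw [Real.dist_eq]; exact hd1.trans hδMk)
        (by rw [Real.dist_eq]; exact hd2.trans hδNk)
    have := Hk _ (hbmem τ' hτ'I) _ (hamem τ hτI) hdd
    rwa [Real.dist_eq] at this
  -- continuity of the composites
  have hq1' : ContinuousOn (fun σ => p1 k (z' σ) (ψ' (-σ))) (Icc (0:ℝ) h) := by
    have hFcomp : ContinuousOn (fun σ => F (z' σ, ψ' (-σ))) (Icc (0:ℝ) h) :=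
      hFc.comp (pair_contOn hz'.1 hψ'.1) (pair_mapsTo hz'J hψ'I)
    exact (hFcomp.clm_apply continuousOn_const).congr
      fun σ hσ => hp1F _ _ (hbJI σ hσ).1 (hbJI σ hσ).2
  have hq1 : ContinuousOn (fun σ => p1 k (z σ) (ψ (-σ))) (Icc (0:ℝ) h) := by
    have hFcomp : ContinuousOn (fun σ => F (z σ, ψ (-σ))) (Icc (0:ℝ) h) :=
      hFc.comp (pair_contOn hz.1 hψ.1) (pair_mapsTo hzJ hψI)
    exact (hFcomp.clm_apply continuousOn_const).congr
      fun σ hσ => hp1F _ _ (haJI σ hσ).1 (haJI σ hσ).2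
  have hq2' : ContinuousOn (fun σ => p2 k (z' σ) (ψ' (-σ))) (Icc (0:ℝ) h) := by
    have hFcomp : ContinuousOn (fun σ => F (z' σ, ψ' (-σ))) (Icc (0:ℝ) h) :=
      hFc.comp (pair_contOn hz'.1 hψ'.1) (pair_mapsTo hz'J hψ'I)
    exact (hFcomp.clm_apply continuousOn_const).congr
      fun σ hσ => hp2F _ _ (hbJI σ hσ).1 (hbJI σ hσ).2
  have hq2 : ContinuousOn (fun σ => p2 k (z σ) (ψ (-σ))) (Icc (0:ℝ) h) := by
    have hFcomp : ContinuousOn (fun σ => F (z σ, ψ (-σ))) (Icc (0:ℝ) h) :=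
      hFc.comp (pair_contOn hz.1 hψ.1) (pair_mapsTo hzJ hψI)
    exact (hFcomp.clm_apply continuousOn_const).congr
      fun σ hσ => hp2F _ _ (haJI σ hσ).1 (haJI σ hσ).2
  have hcu : ContinuousOn u (Icc (0:ℝ) h) := hu.1
  have hcχ : ContinuousOn (fun σ => χ (-σ)) (Icc (0:ℝ) h) :=
    hχ.1.comp continuous_neg.continuousOn neg_mapsTo
  have hSu : ∀ σ ∈ Icc (0:ℝ) h, |u σ| ≤ supN 0 h u := fun σ hσ => norm_le_supN hcu hσ
  have hSχ : ∀ σ ∈ Icc (0:ℝ) h, |χ (-σ)| ≤ supN (-h) 0 χ := fun σ hσ =>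
    norm_le_supN hχ.1 (neg_mapsTo hσ)
  have hSu0 : 0 ≤ supN 0 h u := supN_nonneg _ _ _
  have hSχ0 : 0 ≤ supN (-h) 0 χ := supN_nonneg _ _ _
  have hsub0τ : uIcc (0:ℝ) τ ⊆ Icc (0:ℝ) h := by
    rw [uIcc_of_le hτ.1.le]; exact Icc_subset_Icc le_rfl hτ.2.le
  have hsubττ' : uIcc τ τ' ⊆ Icc (0:ℝ) h := uIcc_subset_Icc hτI hτ'I
  have hint1'a : IntervalIntegrable (fun σ => p1 k (z' σ) (ψ' (-σ)) * u σ)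
      MeasureTheory.volume 0 τ := ((hq1'.mul hcu).mono hsub0τ).intervalIntegrable
  have hint1'b : IntervalIntegrable (fun σ => p1 k (z' σ) (ψ' (-σ)) * u σ)
      MeasureTheory.volume τ τ' := ((hq1'.mul hcu).mono hsubττ').intervalIntegrable
  have hint1a : IntervalIntegrable (fun σ => p1 k (z σ) (ψ (-σ)) * u σ)
      MeasureTheory.volume 0 τ := ((hq1.mul hcu).mono hsub0τ).intervalIntegrable
  have hint2'a : IntervalIntegrable (fun σ => p2 k (z' σ) (ψ' (-σ)) * χ (-σ))
      MeasureTheory.volume 0 τ := ((hq2'.mul hcχ).mono hsub0τ).intervalIntegrable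
  have hint2'b : IntervalIntegrable (fun σ => p2 k (z' σ) (ψ' (-σ)) * χ (-σ))
      MeasureTheory.volume τ τ' := ((hq2'.mul hcχ).mono hsubττ').intervalIntegrable
  have hint2a : IntervalIntegrable (fun σ => p2 k (z σ) (ψ (-σ)) * χ (-σ))
      MeasureTheory.volume 0 τ := ((hq2.mul hcχ).mono hsub0τ).intervalIntegrable
  have key1 : |(∫ σ in (0:ℝ)..τ', p1 k (z' σ) (ψ' (-σ)) * u σ)
      - ∫ σ in (0:ℝ)..τ, p1 k (z σ) (ψ (-σ)) * u σ| ≤ ε * supN 0 h u := by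
    have hsplit := intervalIntegral.integral_add_adjacent_intervals hint1'a hint1'b
    have hd := intervalIntegral.integral_sub hint1'a hint1a
    have heq : (∫ σ in (0:ℝ)..τ', p1 k (z' σ) (ψ' (-σ)) * u σ)
        - ∫ σ in (0:ℝ)..τ, p1 k (z σ) (ψ (-σ)) * u σ
        = (∫ σ in (0:ℝ)..τ, (p1 k (z' σ) (ψ' (-σ)) * u σ - p1 k (z σ) (ψ (-σ)) * u σ))
          + ∫ σ in τ..τ', p1 k (z' σ) (ψ' (-σ)) * u σ := by
      rw [← hsplit, hd]; ring
    rw [heq]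
    have hb1 : ‖∫ σ in (0:ℝ)..τ,
        (p1 k (z' σ) (ψ' (-σ)) * u σ - p1 k (z σ) (ψ (-σ)) * u σ)‖
        ≤ (ε2 * supN 0 h u) * |τ - 0| := by
      apply intervalIntegral.norm_integral_le_of_norm_le_const
      intro x hx
      have hxI : x ∈ Icc (0:ℝ) h := hsub0τ (Set.uIoc_subset_uIcc hx)
      rw [Real.norm_eq_abs, show p1 k (z' x) (ψ' (-x)) * u x - p1 k (z x) (ψ (-x)) * u x
        = (p1 k (z' x) (ψ' (-x)) - p1 k (z x) (ψ (-x))) * u x by ring, abs_mul]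
      exact mul_le_mul (hp1d x hxI) (hSu x hxI) (abs_nonneg _) hε20.le
    have hb2 : ‖∫ σ in τ..τ', p1 k (z' σ) (ψ' (-σ)) * u σ‖
        ≤ (C * supN 0 h u) * |τ' - τ| := by
      apply intervalIntegral.norm_integral_le_of_norm_le_const
      intro x hx
      have hxI : x ∈ Icc (0:ℝ) h := hsubττ' (Set.uIoc_subset_uIcc hx)
      rw [Real.norm_eq_abs, abs_mul]
      exact mul_le_mul (hp1b x hxI) (hSu x hxI) (abs_nonneg _) hC0.le
    have hb1' : (ε2 * supN 0 h u) * |τ - 0| ≤ ε / 2 * supN 0 h u := by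
      calc (ε2 * supN 0 h u) * |τ - 0| = ε2 * supN 0 h u * τ := by
            rw [sub_zero, abs_of_nonneg hτ.1.le]
        _ ≤ ε2 * supN 0 h u * h :=
            mul_le_mul_of_nonneg_left hτ.2.le (mul_nonneg hε20.le hSu0)
        _ = ε2 * h * supN 0 h u := by ring
        _ ≤ ε / 2 * supN 0 h u := mul_le_mul_of_nonneg_right hε2half hSu0
    have hb2' : (C * supN 0 h u) * |τ' - τ| ≤ ε / 2 * supN 0 h u := by
      calc (C * supN 0 h u) * |τ' - τ| ≤ (C * supN 0 h u) * δ :=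
            mul_le_mul_of_nonneg_left hcτ (mul_nonneg hC0.le hSu0)
        _ = (C * δ) * supN 0 h u := by ring
        _ ≤ ε / 2 * supN 0 h u := mul_le_mul_of_nonneg_right hCδ hSu0
    calc |(∫ σ in (0:ℝ)..τ, (p1 k (z' σ) (ψ' (-σ)) * u σ - p1 k (z σ) (ψ (-σ)) * u σ))
          + ∫ σ in τ..τ', p1 k (z' σ) (ψ' (-σ)) * u σ|
        ≤ |∫ σ in (0:ℝ)..τ, (p1 k (z' σ) (ψ' (-σ)) * u σ - p1 k (z σ) (ψ (-σ)) * u σ)|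
          + |∫ σ in τ..τ', p1 k (z' σ) (ψ' (-σ)) * u σ| := abs_add_le _ _
      _ ≤ ε / 2 * supN 0 h u + ε / 2 * supN 0 h u := add_le_add (hb1.trans hb1') (hb2.trans hb2')
      _ = ε * supN 0 h u := by ring
  have key2 : |(∫ σ in (0:ℝ)..τ', p2 k (z' σ) (ψ' (-σ)) * χ (-σ))
      - ∫ σ in (0:ℝ)..τ, p2 k (z σ) (ψ (-σ)) * χ (-σ)| ≤ ε * supN (-h) 0 χ := by
    have hsplit := intervalIntegral.integral_add_adjacent_intervals hint2'a hint2'b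
    have hd := intervalIntegral.integral_sub hint2'a hint2a
    have heq : (∫ σ in (0:ℝ)..τ', p2 k (z' σ) (ψ' (-σ)) * χ (-σ))
        - ∫ σ in (0:ℝ)..τ, p2 k (z σ) (ψ (-σ)) * χ (-σ)
        = (∫ σ in (0:ℝ)..τ, (p2 k (z' σ) (ψ' (-σ)) * χ (-σ) - p2 k (z σ) (ψ (-σ)) * χ (-σ)))
          + ∫ σ in τ..τ', p2 k (z' σ) (ψ' (-σ)) * χ (-σ) := by
      rw [← hsplit, hd]; ring
    rw [heq]
    have hb1 : ‖∫ σ in (0:ℝ)..τ,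
        (p2 k (z' σ) (ψ' (-σ)) * χ (-σ) - p2 k (z σ) (ψ (-σ)) * χ (-σ))‖
        ≤ (ε2 * supN (-h) 0 χ) * |τ - 0| := by
      apply intervalIntegral.norm_integral_le_of_norm_le_const
      intro x hx
      have hxI : x ∈ Icc (0:ℝ) h := hsub0τ (Set.uIoc_subset_uIcc hx)
      rw [Real.norm_eq_abs, show p2 k (z' x) (ψ' (-x)) * χ (-x) - p2 k (z x) (ψ (-x)) * χ (-x)
        = (p2 k (z' x) (ψ' (-x)) - p2 k (z x) (ψ (-x))) * χ (-x) by ring, abs_mul]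
      exact mul_le_mul (hp2d x hxI) (hSχ x hxI) (abs_nonneg _) hε20.le
    have hb2 : ‖∫ σ in τ..τ', p2 k (z' σ) (ψ' (-σ)) * χ (-σ)‖
        ≤ (C * supN (-h) 0 χ) * |τ' - τ| := by
      apply intervalIntegral.norm_integral_le_of_norm_le_const
      intro x hx
      have hxI : x ∈ Icc (0:ℝ) h := hsubττ' (Set.uIoc_subset_uIcc hx)
      rw [Real.norm_eq_abs, abs_mul]
      exact mul_le_mul (hp2b x hxI) (hSχ x hxI) (abs_nonneg _) hC0.le
    have hb1' : (ε2 * supN (-h) 0 χ) * |τ - 0| ≤ ε / 2 * supN (-h) 0 χ := by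
      calc (ε2 * supN (-h) 0 χ) * |τ - 0| = ε2 * supN (-h) 0 χ * τ := by
            rw [sub_zero, abs_of_nonneg hτ.1.le]
        _ ≤ ε2 * supN (-h) 0 χ * h :=
            mul_le_mul_of_nonneg_left hτ.2.le (mul_nonneg hε20.le hSχ0)
        _ = ε2 * h * supN (-h) 0 χ := by ring
        _ ≤ ε / 2 * supN (-h) 0 χ := mul_le_mul_of_nonneg_right hε2half hSχ0
    have hb2' : (C * supN (-h) 0 χ) * |τ' - τ| ≤ ε / 2 * supN (-h) 0 χ := by
      calc (C * supN (-h) 0 χ) * |τ' - τ| ≤ (C * supN (-h) 0 χ) * δ :=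
            mul_le_mul_of_nonneg_left hcτ (mul_nonneg hC0.le hSχ0)
        _ = (C * δ) * supN (-h) 0 χ := by ring
        _ ≤ ε / 2 * supN (-h) 0 χ := mul_le_mul_of_nonneg_right hCδ hSχ0
    calc |(∫ σ in (0:ℝ)..τ, (p2 k (z' σ) (ψ' (-σ)) * χ (-σ) - p2 k (z σ) (ψ (-σ)) * χ (-σ)))
          + ∫ σ in τ..τ', p2 k (z' σ) (ψ' (-σ)) * χ (-σ)|
        ≤ |∫ σ in (0:ℝ)..τ, (p2 k (z' σ) (ψ' (-σ)) * χ (-σ) - p2 k (z σ) (ψ (-σ)) * χ (-σ))|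
          + |∫ σ in τ..τ', p2 k (z' σ) (ψ' (-σ)) * χ (-σ)| := abs_add_le _ _
      _ ≤ ε / 2 * supN (-h) 0 χ + ε / 2 * supN (-h) 0 χ :=
          add_le_add (hb1.trans hb1') (hb2.trans hb2')
      _ = ε * supN (-h) 0 χ := by ring
  have key3 : |k (z' τ') (ψ' (-τ')) * s - k (z τ) (ψ (-τ)) * s| ≤ ε * |s| := by
    rw [show k (z' τ') (ψ' (-τ')) * s - k (z τ) (ψ (-τ)) * s
        = (k (z' τ') (ψ' (-τ')) - k (z τ) (ψ (-τ))) * s by ring, abs_mul]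
    exact mul_le_mul_of_nonneg_right hkd (abs_nonneg _)
  have hsum : DIk k z' ψ' τ' u χ s - DIk k z ψ τ u χ s
      = ((∫ σ in (0:ℝ)..τ', p1 k (z' σ) (ψ' (-σ)) * u σ)
          - ∫ σ in (0:ℝ)..τ, p1 k (z σ) (ψ (-σ)) * u σ)
        + (((∫ σ in (0:ℝ)..τ', p2 k (z' σ) (ψ' (-σ)) * χ (-σ))
          - ∫ σ in (0:ℝ)..τ, p2 k (z σ) (ψ (-σ)) * χ (-σ))
        + (k (z' τ') (ψ' (-τ')) * s - k (z τ) (ψ (-τ)) * s)) := by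
    simp only [DIk]; ring
  rw [hsum]
  have t1 := (abs_add_le ((∫ σ in (0:ℝ)..τ', p1 k (z' σ) (ψ' (-σ)) * u σ)
      - ∫ σ in (0:ℝ)..τ, p1 k (z σ) (ψ (-σ)) * u σ) _).trans
    (add_le_add key1 ((abs_add_le ((∫ σ in (0:ℝ)..τ', p2 k (z' σ) (ψ' (-σ)) * χ (-σ))
      - ∫ σ in (0:ℝ)..τ, p2 k (z σ) (ψ (-σ)) * χ (-σ)) _).trans (add_le_add key2 key3)))
  refine t1.trans ?_
  have e1 : ε * supN 0 h u ≤ ε * nC1 0 h u :=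
    mul_le_mul_of_nonneg_left (supN_le_nC1 0 h u) hε.le
  have e2 : ε * supN (-h) 0 χ ≤ ε * nC1 (-h) 0 χ :=
    mul_le_mul_of_nonneg_left (supN_le_nC1 (-h) 0 χ) hε.le
  have e3 : ε * (nC1 0 h u + nC1 (-h) 0 χ + |s|)
      = ε * nC1 0 h u + ε * nC1 (-h) 0 χ + ε * |s| := by ring
  rw [e3]
  linarith

/-- I^k is continuously Fréchet differentiable with the stated derivative. -/
theorem stmt10 (J I : Set ℝ) (hJ : IsOpen J) (hI : IsOpen I) (h : ℝ) (hh : 0 < h)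
    (k : ℝ → ℝ → ℝ) (hk : ContDiffOn ℝ 1 (fun p : ℝ × ℝ => k p.1 p.2) (J ×ˢ I)) :
    (∀ z ψ : ℝ → ℝ, ∀ τ : ℝ, DomIk J I h z ψ τ →
      ∀ ε > 0, ∃ δ > 0, ∀ z' ψ' : ℝ → ℝ, ∀ τ' : ℝ, DomIk J I h z' ψ' τ' →
        nC1 0 h (z' - z) ≤ δ → nC1 (-h) 0 (ψ' - ψ) ≤ δ → |τ' - τ| ≤ δ →
        |Ik k z' ψ' τ' - Ik k z ψ τ - DIk k z ψ τ (z' - z) (ψ' - ψ) (τ' - τ)| ≤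
          ε * (nC1 0 h (z' - z) + nC1 (-h) 0 (ψ' - ψ) + |τ' - τ|)) ∧
    (∀ z ψ : ℝ → ℝ, ∀ τ : ℝ, DomIk J I h z ψ τ →
      ∀ ε > 0, ∃ δ > 0, ∀ z' ψ' : ℝ → ℝ, ∀ τ' : ℝ, DomIk J I h z' ψ' τ' →
        nC1 0 h (z' - z) ≤ δ → nC1 (-h) 0 (ψ' - ψ) ≤ δ → |τ' - τ| ≤ δ →
        ∀ u χ : ℝ → ℝ, ∀ s : ℝ, C1on 0 h u → C1on (-h) 0 χ →
          |DIk k z' ψ' τ' u χ s - DIk k z ψ τ u χ s| ≤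
            ε * (nC1 0 h u + nC1 (-h) 0 χ + |s|)) :=
  ⟨fun _ _ _ hdom _ hε => part1 hJ hI hh hk hdom hε,
   fun _ _ _ hdom _ hε => part2 hJ hI hh hk hdom hε⟩
end

section
/- Let h > 0, let U ⊆ C¹([-h,0],ℝⁿ) be open, f : U → ℝⁿ, and let x : [-h,t_φ) → ℝⁿ be a solution of x' = f(x_t) on a finite maximal interval with x_t ∈ U for t ∈ (0,t_φ), t_φ < ∞. Assume both x and x' are bounded on [-h,t_φ) and that f satisfies: there is L ≥ 0 with |f(φ₁) − f(φ₂)| ≤ L ‖φ₁ − φ₂‖_∞ for all φ₁, φ₂ in the trajectory T = {x_t : t ∈ [0,t_φ)}. Then the trajectory T = {x_t : t ∈ [0,t_φ)} ⊆ C¹([-h,0],ℝⁿ) is relatively compact in the C¹-norm. -/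
open Set

lemma mySupN_le {X : Type*} [NormedAddCommGroup X] {a b : ℝ} {f : ℝ → X} {c : ℝ}
    (hc : 0 ≤ c) (hf : ∀ s ∈ Set.Icc a b, ‖f s‖ ≤ c) : supN a b f ≤ c :=
  Real.iSup_le (fun s => hf s.1 s.2) hc

lemma mySupN_nonneg {X : Type*} [NormedAddCommGroup X] {a b : ℝ} {f : ℝ → X} :
    0 ≤ supN a b f :=
  Real.iSup_nonneg (fun s => norm_nonneg _)

/-- on a finite maximal interval, if x and x' are bounded and f is
Lipschitz (sup-norm) on the trajectory, then the trajectory {x_t : t ∈ [0,t_φ)} is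
relatively compact in the C¹-norm (stated sequentially). -/
theorem stmt17 (n : ℕ) (h tφ : ℝ) (hh : 0 < h) (htφ : 0 < tφ)
    (U : Set (ℝ → EuclideanSpace ℝ (Fin n)))
    (f : (ℝ → EuclideanSpace ℝ (Fin n)) → EuclideanSpace ℝ (Fin n))
    (x : ℝ → EuclideanSpace ℝ (Fin n)) (x' : ℝ → EuclideanSpace ℝ (Fin n))
    (hx : ∀ t ∈ Set.Ico (-h) tφ, HasDerivWithinAt x (x' t) (Set.Ico (-h) tφ) t)
    (hx'c : ContinuousOn x' (Set.Ico (-h) tφ))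
    (hU : ∀ t ∈ Set.Ioo (0:ℝ) tφ, (fun θ => x (t + θ)) ∈ U)
    (hode : ∀ t ∈ Set.Ico (0:ℝ) tφ, x' t = f (fun θ => x (t + θ)))
    (hxb : ∃ M : ℝ, ∀ t ∈ Set.Ico (-h) tφ, ‖x t‖ ≤ M ∧ ‖x' t‖ ≤ M)
    (L : ℝ) (hL : 0 ≤ L)
    (hfL : ∀ t₁ ∈ Set.Ico (0:ℝ) tφ, ∀ t₂ ∈ Set.Ico (0:ℝ) tφ,
      ‖f (fun θ => x (t₁ + θ)) - f (fun θ => x (t₂ + θ))‖ ≤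
        L * supN (-h) 0 ((fun θ => x (t₁ + θ)) - fun θ => x (t₂ + θ))) :
    ∀ t : ℕ → ℝ, (∀ k, t k ∈ Set.Ico (0:ℝ) tφ) →
      ∃ φ : ℕ → ℕ, StrictMono φ ∧ ∃ g : ℝ → EuclideanSpace ℝ (Fin n), C1on (-h) 0 g ∧
        Filter.Tendsto
          (fun k => nC1 (-h) 0 ((fun θ => x (t (φ k) + θ)) - g))
          Filter.atTop (nhds 0) := by
  intro t ht
  obtain ⟨M, hM⟩ := hxb
  have hMem0 : (-h) ∈ Set.Ico (-h) tφ := ⟨le_refl _, by linarith⟩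
  have hM0 : 0 ≤ M := (norm_nonneg _).trans (hM (-h) hMem0).1
  -- x is M-Lipschitz on Ico (-h) tφ
  have hxlip : ∀ s ∈ Set.Ico (-h) tφ, ∀ u ∈ Set.Ico (-h) tφ, ‖x s - x u‖ ≤ M * |s - u| := by
    intro s hs u hu
    have := (convex_Ico (-h) tφ).norm_image_sub_le_of_norm_hasDerivWithin_le hx
      (fun r hr => (hM r hr).2) hu hs
    simpa [Real.norm_eq_abs] using this
  -- x' is L*M-Lipschitz on Ico 0 tφ
  have hx'lip : ∀ s ∈ Set.Ico (0:ℝ) tφ, ∀ u ∈ Set.Ico (0:ℝ) tφ,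
      ‖x' s - x' u‖ ≤ L * M * |s - u| := by
    intro s hs u hu
    rw [hode s hs, hode u hu]
    have h1 := hfL s hs u hu
    have h2 : supN (-h) 0 ((fun θ => x (s + θ)) - fun θ => x (u + θ)) ≤ M * |s - u| := by
      apply mySupN_le (by positivity)
      intro θ hθ
      have hsθ : s + θ ∈ Set.Ico (-h) tφ :=
        ⟨by cases hθ with | intro a b => linarith [hs.1], by cases hθ with | intro a b => linarith [hs.2]⟩
      have huθ : u + θ ∈ Set.Ico (-h) tφ :=
        ⟨by cases hθ with | intro a b => linarith [hu.1], by cases hθ with | intro a b => linarith [hu.2]⟩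
      have := hxlip (s + θ) hsθ (u + θ) huθ
      have heq : s + θ - (u + θ) = s - u := by ring
      simpa [Pi.sub_apply, heq] using this
    calc ‖f (fun θ => x (s + θ)) - f (fun θ => x (u + θ))‖
        ≤ L * supN (-h) 0 ((fun θ => x (s + θ)) - fun θ => x (u + θ)) := h1
      _ ≤ L * (M * |s - u|) := mul_le_mul_of_nonneg_left h2 hL
      _ = L * M * |s - u| := by ring
  -- the approximating sequence to tφ
  set sq : ℕ → ℝ := fun k => tφ - tφ / (k + 1) with hsq
  have hsqmem : ∀ k : ℕ, sq k ∈ Set.Ico (0:ℝ) tφ := by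
    intro k
    have hk1 : (0:ℝ) < k + 1 := by positivity
    constructor
    · have : tφ / (k + 1) ≤ tφ := by
        apply div_le_self htφ.le
        simp
      simp only [hsq]; linarith
    · have : 0 < tφ / (k + 1) := by positivity
      simp only [hsq]; linarith
  have hsqlt : ∀ N k : ℕ, N ≤ k → tφ / (k + 1) ≤ tφ / (N + 1) := by
    intro N k hNk
    apply div_le_div_of_nonneg_left htφ.le (by positivity)
    linarith [(Nat.cast_le (α := ℝ)).2 hNk]
  obtain ⟨c, hc⟩ : ∃ c, Filter.Tendsto (fun k => x' (sq k)) Filter.atTop (nhds c) := by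
    apply cauchySeq_tendsto_of_complete
    apply cauchySeq_of_le_tendsto_0 (fun N : ℕ => L * M * (tφ / ((N : ℝ) + 1)))
    · intro m k N hmN hkN
      rw [dist_eq_norm]
      have h1 := hx'lip (sq m) (hsqmem m) (sq k) (hsqmem k)
      have h2 : |sq m - sq k| ≤ tφ / (N + 1) := by
        have hm := hsqlt N m hmN
        have hk := hsqlt N k hkN
        have hm0 : 0 < tφ / (m + 1) := by positivity
        have hk0 : 0 < tφ / (k + 1) := by positivity
        rw [abs_le]
        constructor <;> simp only [hsq] <;> [linarith; linarith]
      calc ‖x' (sq m) - x' (sq k)‖ ≤ L * M * |sq m - sq k| := h1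
        _ ≤ L * M * (tφ / (N + 1)) := by
            apply mul_le_mul_of_nonneg_left h2 (by positivity)
    · have : (fun N : ℕ => L * M * (tφ / (N + 1))) = fun N : ℕ => L * M * tφ * (1 / (N + 1)) := by
        funext N; ring
      rw [this]
      simpa using tendsto_one_div_add_atTop_nhds_zero_nat.const_mul (L * M * tφ)
  -- extension of x' to Icc (-h) tφ
  set D : ℝ → EuclideanSpace ℝ (Fin n) := fun s => if s < tφ then x' s else c with hD
  have hDeq : ∀ s, s < tφ → D s = x' s := fun s hs => if_pos hs
  have hDtφ : D tφ = c := if_neg (lt_irrefl _)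
  -- key estimate near tφ
  have hnear : ∀ s ∈ Set.Ico (0:ℝ) tφ, ‖x' s - c‖ ≤ L * M * (tφ - s) := by
    intro s hs
    have htt : Filter.Tendsto (fun k => ‖x' s - x' (sq k)‖) Filter.atTop (nhds ‖x' s - c‖) :=
      (tendsto_const_nhds.sub hc).norm
    apply le_of_tendsto htt
    have hev : ∀ᶠ k : ℕ in Filter.atTop, tφ / (k + 1) ≤ tφ - s := by
      have h0 : Filter.Tendsto (fun k : ℕ => tφ / (k + 1)) Filter.atTop (nhds 0) := by
        have : (fun k : ℕ => tφ / (k + 1)) = fun k : ℕ => tφ * (1 / (k + 1)) := by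
          funext k; ring
        rw [this]
        simpa using tendsto_one_div_add_atTop_nhds_zero_nat.const_mul tφ
      have hpos : (0:ℝ) < tφ - s := by linarith [hs.2]
      filter_upwards [h0.eventually_le_const (by linarith : (0:ℝ) < tφ - s)] with k hk
      exact hk
    filter_upwards [hev] with k hk
    have h1 := hx'lip s hs (sq k) (hsqmem k)
    have h2 : |s - sq k| ≤ tφ - s := by
      have : 0 < tφ / (k + 1) := by positivity
      rw [abs_le]
      constructor <;> simp only [hsq] <;> [linarith; linarith]
    calc ‖x' s - x' (sq k)‖ ≤ L * M * |s - sq k| := h1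
      _ ≤ L * M * (tφ - s) := mul_le_mul_of_nonneg_left h2 (by positivity)
  -- D Lipschitz on Icc 0 tφ
  have hDlip : ∀ s ∈ Set.Icc (0:ℝ) tφ, ∀ u ∈ Set.Icc (0:ℝ) tφ,
      ‖D s - D u‖ ≤ L * M * |s - u| := by
    have key : ∀ s ∈ Set.Icc (0:ℝ) tφ, ∀ u ∈ Set.Icc (0:ℝ) tφ, u ≤ s →
        ‖D s - D u‖ ≤ L * M * |s - u| := by
      intro s hs u hu hus
      by_cases hslt : s < tφ
      · have hult : u < tφ := lt_of_le_of_lt hus hslt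
        rw [hDeq s hslt, hDeq u hult]
        exact hx'lip s ⟨hs.1, hslt⟩ u ⟨hu.1, hult⟩
      · have hstφ : s = tφ := le_antisymm hs.2 (not_lt.1 hslt)
        by_cases hult : u < tφ
        · rw [hstφ, hDtφ, hDeq u hult, norm_sub_rev]
          have h1 := hnear u ⟨hu.1, hult⟩
          have habs : |tφ - u| = tφ - u := abs_of_nonneg (by linarith [hu.2])
          rw [habs]
          exact h1
        · have hutφ : u = tφ := le_antisymm hu.2 (not_lt.1 hult)
          rw [hstφ, hutφ]
          simp [hDtφ]
    intro s hs u hu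
    rcases le_total u s with hus | hsu
    · exact key s hs u hu hus
    · rw [norm_sub_rev, abs_sub_comm]
      exact key u hu s hs hsu
  -- D bounded by M
  have hDM : ∀ s ∈ Set.Icc (-h) tφ, ‖D s‖ ≤ M := by
    intro s hs
    by_cases hslt : s < tφ
    · rw [hDeq s hslt]; exact (hM s ⟨hs.1, hslt⟩).2
    · have hDc : D s = c := if_neg hslt
      rw [hDc]
      apply le_of_tendsto hc.norm
      filter_upwards with k
      exact (hM (sq k) ⟨by linarith [(hsqmem k).1], (hsqmem k).2⟩).2
  -- D continuous on Icc (-h) tφ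
  have hDcont : ContinuousOn D (Set.Icc (-h) tφ) := by
    intro p hp
    by_cases hplt : p < tφ
    · have hIco : Set.Ico (-h) tφ ∈ nhdsWithin p (Set.Icc (-h) tφ) := by
        apply Filter.mem_of_superset (inter_mem_nhdsWithin (Set.Icc (-h) tφ) (Iio_mem_nhds hplt))
        rintro y ⟨hy1, hy2⟩
        exact ⟨hy1.1, hy2⟩
      have h2 : ContinuousWithinAt x' (Set.Icc (-h) tφ) p :=
        (hx'c p ⟨hp.1, hplt⟩).mono_of_mem_nhdsWithin hIco
      apply h2.congr_of_eventuallyEq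
      · filter_upwards [hIco] with y hy
        exact hDeq y hy.2
      · exact hDeq p hplt
    · have hptφ : p = tφ := le_antisymm hp.2 (not_lt.1 hplt)
      have hIcc0 : Set.Icc (0:ℝ) tφ ∈ nhdsWithin p (Set.Icc (-h) tφ) := by
        apply Filter.mem_of_superset (inter_mem_nhdsWithin (Set.Icc (-h) tφ)
          (Ioi_mem_nhds (by rw [hptφ]; exact htφ)))
        rintro y ⟨hy1, hy2⟩
        exact ⟨le_of_lt hy2, hy1.2⟩
      have hcw : ContinuousWithinAt D (Set.Icc (0:ℝ) tφ) p := by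
        rw [Metric.continuousWithinAt_iff]
        intro ε hε
        refine ⟨(ε/2) / (L * M + 1), by positivity, fun u hu hdist => ?_⟩
        have hpmem : p ∈ Set.Icc (0:ℝ) tφ := ⟨by linarith [hp.2, hptφ, htφ.le, hptφ ▸ htφ.le], hp.2⟩
        have h1 := hDlip u hu p hpmem
        rw [dist_eq_norm] at hdist ⊢
        have h2 : |u - p| < (ε/2) / (L * M + 1) := by simpa [Real.norm_eq_abs] using hdist
        have h3 : L * M * |u - p| ≤ (L * M + 1) * ((ε/2) / (L * M + 1)) := by
          apply mul_le_mul (by linarith) h2.le (abs_nonneg _) (by positivity)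
        have h4 : (L * M + 1) * ((ε/2) / (L * M + 1)) = ε/2 := by
          field_simp
        calc ‖D u - D p‖ ≤ L * M * |u - p| := h1
          _ ≤ ε/2 := by rw [h4] at h3; exact h3
          _ < ε := by linarith
      exact hcw.mono_of_mem_nhdsWithin hIcc0
  -- the C¹ extension X of x to Icc (-h) tφ
  set X : ℝ → EuclideanSpace ℝ (Fin n) := fun s => x (-h) + ∫ u in (-h)..s, D u with hX
  have hDint : ∀ s ∈ Set.Icc (-h) tφ, IntervalIntegrable D MeasureTheory.volume (-h) s := by
    intro s hs
    apply ContinuousOn.intervalIntegrable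
    apply hDcont.mono
    rw [Set.uIcc_of_le hs.1]
    exact Set.Icc_subset_Icc (le_refl _) hs.2
  have hXd : ∀ p ∈ Set.Icc (-h) tφ, HasDerivWithinAt X (D p) (Set.Icc (-h) tφ) p := by
    intro p hp
    haveI : Fact (p ∈ Set.Icc (-h) tφ) := ⟨hp⟩
    have H : HasDerivWithinAt (fun u => ∫ r in (-h)..u, D r) (D p) (Set.Icc (-h) tφ) p :=
      intervalIntegral.integral_hasDerivWithinAt_right (hDint p hp)
        (hDcont.stronglyMeasurableAtFilter_nhdsWithin measurableSet_Icc p)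
        (hDcont p hp)
    exact H.const_add (x (-h))
  have hXlip : ∀ s ∈ Set.Icc (-h) tφ, ∀ u ∈ Set.Icc (-h) tφ, ‖X s - X u‖ ≤ M * |s - u| := by
    intro s hs u hu
    have := (convex_Icc (-h) tφ).norm_image_sub_le_of_norm_hasDerivWithin_le hXd hDM hu hs
    simpa [Real.norm_eq_abs] using this
  -- X agrees with x on Ico (-h) tφ
  have hXx : ∀ s ∈ Set.Ico (-h) tφ, X s = x s := by
    intro s hs
    have hFd : ∀ p ∈ Set.Ico (-h) tφ,
        HasDerivWithinAt (fun r => X r - x r) 0 (Set.Ico (-h) tφ) p := by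
      intro p hp
      have h1 : HasDerivWithinAt X (D p) (Set.Ico (-h) tφ) p :=
        ((hXd p ⟨hp.1, hp.2.le⟩).mono Set.Ico_subset_Icc_self)
      have h2 := hx p hp
      have := h1.sub h2
      rw [hDeq p hp.2, sub_self] at this
      exact this
    have := (convex_Ico (-h) tφ).norm_image_sub_le_of_norm_hasDerivWithin_le (C := 0) hFd
      (fun r _ => by simp) hMem0 hs
    have hXh : X (-h) = x (-h) := by
      simp [hX, intervalIntegral.integral_same]
    have h0 : ‖X s - x s‖ ≤ 0 := by simpa [hXh] using this
    exact sub_eq_zero.1 (norm_le_zero_iff.1 h0)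
  -- extract convergent subsequence
  obtain ⟨a, ha, φ, hφmono, hφconv⟩ :=
    tendsto_subseq_of_bounded (Metric.isBounded_Ico (0:ℝ) tφ) (x := t) ht
  have ha' : a ∈ Set.Icc (0:ℝ) tφ := by
    rw [closure_Ico (ne_of_lt htφ)] at ha
    exact ha
  refine ⟨φ, hφmono, fun θ => X (a + θ), ?_, ?_⟩
  · -- C1on
    have hmap : ∀ θ ∈ Set.Icc (-h) (0:ℝ), a + θ ∈ Set.Icc (-h) tφ := by
      intro θ hθ
      exact ⟨by linarith [ha'.1, hθ.1], by linarith [ha'.2, hθ.2]⟩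
    have hgd : ∀ θ ∈ Set.Icc (-h) (0:ℝ),
        HasDerivWithinAt (fun θ => X (a + θ)) (D (a + θ)) (Set.Icc (-h) 0) θ := by
      intro θ hθ
      have h1 := hXd (a + θ) (hmap θ hθ)
      have h2 : HasDerivWithinAt (fun r : ℝ => a + r) 1 (Set.Icc (-h) 0) θ :=
        (hasDerivWithinAt_id θ _).const_add a
      have := HasDerivWithinAt.scomp θ h1 h2 hmap
      rw [one_smul] at this
      exact this
    have hud : UniqueDiffOn ℝ (Set.Icc (-h) (0:ℝ)) := uniqueDiffOn_Icc (by linarith)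
    have hgderiv : ∀ θ ∈ Set.Icc (-h) (0:ℝ),
        derivWithin (fun θ => X (a + θ)) (Set.Icc (-h) 0) θ = D (a + θ) := by
      intro θ hθ
      exact (hgd θ hθ).derivWithin (hud θ hθ)
    refine ⟨fun θ hθ => (hgd θ hθ).continuousWithinAt,
      fun θ hθ => (hgd θ hθ).differentiableWithinAt, ?_⟩
    apply ContinuousOn.congr _ hgderiv
    exact hDcont.comp ((continuous_const.add continuous_id).continuousOn) hmap
  · -- convergence
    set g : ℝ → EuclideanSpace ℝ (Fin n) := fun θ => X (a + θ) with hg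
    have hmap : ∀ θ ∈ Set.Icc (-h) (0:ℝ), a + θ ∈ Set.Icc (-h) tφ := by
      intro θ hθ
      exact ⟨by linarith [ha'.1, hθ.1], by linarith [ha'.2, hθ.2]⟩
    have hmapk : ∀ k, ∀ θ ∈ Set.Icc (-h) (0:ℝ), t (φ k) + θ ∈ Set.Ico (-h) tφ := by
      intro k θ hθ
      exact ⟨by linarith [(ht (φ k)).1, hθ.1], by linarith [(ht (φ k)).2, hθ.2]⟩
    have hud : UniqueDiffOn ℝ (Set.Icc (-h) (0:ℝ)) := uniqueDiffOn_Icc (by linarith)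
    -- derivative identity for the difference
    have hFderiv : ∀ k, ∀ θ ∈ Set.Icc (-h) (0:ℝ),
        derivWithin ((fun θ => x (t (φ k) + θ)) - g) (Set.Icc (-h) 0) θ
          = D (t (φ k) + θ) - D (a + θ) := by
      intro k θ hθ
      have hXk : ∀ θ' ∈ Set.Icc (-h) (0:ℝ),
          HasDerivWithinAt (fun r => X (t (φ k) + r)) (D (t (φ k) + θ'))
            (Set.Icc (-h) 0) θ' := by
        intro θ' hθ'
        have h1 := hXd (t (φ k) + θ')
          ⟨(hmapk k θ' hθ').1, (hmapk k θ' hθ').2.le⟩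
        have h2 : HasDerivWithinAt (fun r : ℝ => t (φ k) + r) 1 (Set.Icc (-h) 0) θ' :=
          (hasDerivWithinAt_id θ' _).const_add (t (φ k))
        have := HasDerivWithinAt.scomp θ' h1 h2
          (fun r hr => ⟨(hmapk k r hr).1, (hmapk k r hr).2.le⟩)
        rw [one_smul] at this
        exact this
      have hxk : HasDerivWithinAt (fun r => x (t (φ k) + r)) (D (t (φ k) + θ))
          (Set.Icc (-h) 0) θ := by
        apply (hXk θ hθ).congr
        · intro r hr
          exact (hXx _ (hmapk k r hr)).symm
        · exact (hXx _ (hmapk k θ hθ)).symm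
      have hgd : HasDerivWithinAt g (D (a + θ)) (Set.Icc (-h) 0) θ := by
        have h1 := hXd (a + θ) (hmap θ hθ)
        have h2 : HasDerivWithinAt (fun r : ℝ => a + r) 1 (Set.Icc (-h) 0) θ :=
          (hasDerivWithinAt_id θ _).const_add a
        have := HasDerivWithinAt.scomp θ h1 h2 hmap
        rw [one_smul] at this
        exact this
      exact (hxk.sub hgd).derivWithin (hud θ hθ)
    -- uniform continuity of D
    have hDuc := isCompact_Icc.uniformContinuousOn_of_continuous (s := Set.Icc (-h) tφ) hDcont
    rw [Metric.uniformContinuousOn_iff] at hDuc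
    -- final limit
    rw [Metric.tendsto_atTop]
    intro ε hε
    obtain ⟨δ, hδ, hδprop⟩ := hDuc (ε / 4) (by linarith)
    have hεM : 0 < ε / 4 / (M + 1) := by positivity
    have hconv' := Metric.tendsto_atTop.1 hφconv (min δ (ε / 4 / (M + 1))) (lt_min hδ hεM)
    obtain ⟨N, hN⟩ := hconv'
    refine ⟨N, fun k hk => ?_⟩
    have hdk := hN k hk
    rw [Function.comp_apply, Real.dist_eq] at hdk
    have hd1 : |t (φ k) - a| < δ := lt_of_lt_of_le hdk (min_le_left _ _)
    have hd2 : |t (φ k) - a| < ε / 4 / (M + 1) := lt_of_lt_of_le hdk (min_le_right _ _)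
    -- bound the sup-norm part
    have hs1 : supN (-h) 0 ((fun θ => x (t (φ k) + θ)) - g) ≤ ε / 4 := by
      apply mySupN_le (by positivity)
      intro θ hθ
      have hXeq : x (t (φ k) + θ) = X (t (φ k) + θ) := (hXx _ (hmapk k θ hθ)).symm
      have h1 : ‖X (t (φ k) + θ) - X (a + θ)‖ ≤ M * |t (φ k) + θ - (a + θ)| :=
        hXlip _ ⟨(hmapk k θ hθ).1, (hmapk k θ hθ).2.le⟩ _ (hmap θ hθ)
      have heq : t (φ k) + θ - (a + θ) = t (φ k) - a := by ring
      rw [heq] at h1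
      have h2 : M * |t (φ k) - a| ≤ (M + 1) * (ε / 4 / (M + 1)) :=
        mul_le_mul (by linarith) hd2.le (abs_nonneg _) (by positivity)
      have h3 : (M + 1) * (ε / 4 / (M + 1)) = ε / 4 := by field_simp
      calc ‖((fun θ => x (t (φ k) + θ)) - g) θ‖
          = ‖X (t (φ k) + θ) - X (a + θ)‖ := by rw [Pi.sub_apply, hXeq]
        _ ≤ M * |t (φ k) - a| := h1
        _ ≤ ε / 4 := by rw [h3] at h2; exact h2
    -- bound the derivative part
    have hs2 : supN (-h) 0
        (derivWithin ((fun θ => x (t (φ k) + θ)) - g) (Set.Icc (-h) 0)) ≤ ε / 4 := by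
      apply mySupN_le (by positivity)
      intro θ hθ
      rw [hFderiv k θ hθ]
      have hp1 : t (φ k) + θ ∈ Set.Icc (-h) tφ :=
        ⟨(hmapk k θ hθ).1, (hmapk k θ hθ).2.le⟩
      have hp2 : a + θ ∈ Set.Icc (-h) tφ := hmap θ hθ
      have hdd : dist (t (φ k) + θ) (a + θ) < δ := by
        rw [Real.dist_eq]
        have heq : t (φ k) + θ - (a + θ) = t (φ k) - a := by ring
        rw [heq]; exact hd1
      have := hδprop _ hp1 _ hp2 hdd
      rw [dist_eq_norm] at this
      exact this.le
    have hn1 : 0 ≤ supN (-h) 0 ((fun θ => x (t (φ k) + θ)) - g) := mySupN_nonneg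
    have hn2 : 0 ≤ supN (-h) 0
        (derivWithin ((fun θ => x (t (φ k) + θ)) - g) (Set.Icc (-h) 0)) := mySupN_nonneg
    rw [Real.dist_eq]
    have : nC1 (-h) 0 ((fun θ => x (t (φ k) + θ)) - g) ≤ ε / 2 := by
      unfold nC1
      linarith
    rw [abs_of_nonneg (by unfold nC1; linarith)]
    linarith
end
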